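/- arXiv:1803.00190 — 8 statements merged into one kernel-verified Lean document; each statement's English description precedes it below -/
import Mathlib

section
/- Let Ω ⊆ ℝⁿ be open, X ⊆ Ω a closed convex set, and let ψ(x) = ψ₁(x) − max_{1≤i≤k₂} ψ₂ᵢ(x), where ψ₁ and each ψ₂ᵢ are directionally differentiable on Ω. Then x̄ ∈ X is a d-stationary point of ψ on X if and only if for every index ī ∈ argmax_{1≤i≤k₂} ψ₂ᵢ(x̄), the point x̄ is a d-stationary point of the function ψ₁ − ψ₂ī on X. -/
open Matrix Filter Topology

noncomputable def finMax {k : ℕ} (hk : 0 < k) (g : Fin k → ℝ) : ℝ :=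
  Finset.univ.sup' (Finset.univ_nonempty_iff.mpr ⟨⟨0, hk⟩⟩) g

/-- The one-sided directional derivative of `ψ` at `x` in direction `v` equals `L`. -/
def HasDirDeriv {n : ℕ} (ψ : (Fin n → ℝ) → ℝ) (x v : Fin n → ℝ) (L : ℝ) : Prop :=
  Filter.Tendsto (fun δ : ℝ => (ψ (x + δ • v) - ψ x) / δ) (nhdsWithin 0 (Set.Ioi 0)) (nhds L)

/-- `x₀` is a d(irectional)-stationary point of `ψ` on `X`. -/
def DStat {n : ℕ} (ψ : (Fin n → ℝ) → ℝ) (X : Set (Fin n → ℝ)) (x₀ : Fin n → ℝ) : Prop :=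
  x₀ ∈ X ∧ ∀ x ∈ X, ∃ L, HasDirDeriv ψ x₀ (x - x₀) L ∧ 0 ≤ L

lemma hasDirDeriv_unique {n : ℕ} {ψ : (Fin n → ℝ) → ℝ} {x v : Fin n → ℝ} {L L' : ℝ}
    (h : HasDirDeriv ψ x v L) (h' : HasDirDeriv ψ x v L') : L = L' :=
  tendsto_nhds_unique h h'

lemma hasDirDeriv_sub {n : ℕ} {ψ₁ ψ₂ : (Fin n → ℝ) → ℝ} {x v : Fin n → ℝ} {L₁ L₂ : ℝ}
    (h₁ : HasDirDeriv ψ₁ x v L₁) (h₂ : HasDirDeriv ψ₂ x v L₂) :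
    HasDirDeriv (fun y => ψ₁ y - ψ₂ y) x v (L₁ - L₂) := by
  have := h₁.sub h₂
  apply this.congr
  intro δ
  rw [div_sub_div_same]
  ring_nf

lemma le_finMax {k : ℕ} (hk : 0 < k) (g : Fin k → ℝ) (i : Fin k) : g i ≤ finMax hk g :=
  Finset.le_sup' _ (Finset.mem_univ i)

lemma finMax_le {k : ℕ} (hk : 0 < k) (g : Fin k → ℝ) {c : ℝ} (h : ∀ i, g i ≤ c) :
    finMax hk g ≤ c :=
  Finset.sup'_le _ _ fun i _ => h i

lemma finMax_sub_div {k : ℕ} (hk : 0 < k) (g : Fin k → ℝ) (M δ : ℝ) (hδ : 0 < δ) :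
    (finMax hk g - M) / δ =
      Finset.univ.sup' (Finset.univ_nonempty_iff.mpr ⟨⟨0, hk⟩⟩) (fun i => (g i - M) / δ) := by
  have hmono : Monotone (fun t : ℝ => (t - M) / δ) := by
    intro a b hab
    exact (div_le_div_iff_of_pos_right hδ).mpr (by linarith)
  exact Finset.comp_sup'_eq_sup'_comp _ (fun t => (t - M) / δ) (fun a b => hmono.map_max)

/-- Key lemma: the directional derivative of a finite max is the max of the directional
derivatives over the argmax set. -/
lemma hasDirDeriv_finMax {n k : ℕ} (hk : 0 < k) (ψ₂ : Fin k → (Fin n → ℝ) → ℝ)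
    (x₀ v : Fin n → ℝ) (L : Fin k → ℝ) (hL : ∀ i, HasDirDeriv (ψ₂ i) x₀ v (L i))
    (A : Finset (Fin k)) (hA : A = Finset.univ.filter fun i => ∀ j, ψ₂ j x₀ ≤ ψ₂ i x₀)
    (hAne : A.Nonempty) :
    HasDirDeriv (fun x => finMax hk fun i => ψ₂ i x) x₀ v (A.sup' hAne L) := by
  classical
  set M : ℝ := finMax hk (fun i => ψ₂ i x₀) with hM
  have hune : (Finset.univ : Finset (Fin k)).Nonempty := Finset.univ_nonempty_iff.mpr ⟨⟨0, hk⟩⟩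
  have hmemA : ∀ i ∈ A, ∀ j, ψ₂ j x₀ ≤ ψ₂ i x₀ := by
    intro i hi; rw [hA] at hi; exact (Finset.mem_filter.mp hi).2
  have hAval : ∀ i ∈ A, ψ₂ i x₀ = M := by
    intro i hi
    rw [hM]
    exact le_antisymm (le_finMax hk (fun j => ψ₂ j x₀) i) (finMax_le hk (fun j => ψ₂ j x₀) (hmemA i hi))
  set q : Fin k → ℝ → ℝ := fun i δ => (ψ₂ i (x₀ + δ • v) - M) / δ with hq
  -- each q i for i ∈ A tends to L i
  have hqA : ∀ i ∈ A, Tendsto (q i) (nhdsWithin 0 (Set.Ioi 0)) (nhds (L i)) := by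
    intro i hi
    have := hL i
    rw [HasDirDeriv] at this
    simpa [hq, hAval i hi] using this
  -- the sup over A of q tends to sup' A L
  have hsupA : Tendsto (fun δ => A.sup' hAne (fun i => q i δ)) (nhdsWithin 0 (Set.Ioi 0))
      (nhds (A.sup' hAne L)) := Filter.Tendsto.finset_sup'_nhds_apply hAne hqA
  -- for i ∉ A, q i tends to atBot
  obtain ⟨i₀, hi₀⟩ := id hAne
  have hout : ∀ i, i ∉ A → Tendsto (q i) (nhdsWithin 0 (Set.Ioi 0)) atBot := by
    intro i hi
    have hlt : ψ₂ i x₀ - M < 0 := by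
      rw [hA, Finset.mem_filter] at hi
      push_neg at hi
      obtain ⟨j, hj⟩ := hi (Finset.mem_univ i)
      have hjM : ψ₂ j x₀ ≤ M := hM ▸ le_finMax hk (fun j => ψ₂ j x₀) j
      linarith
    have h1 : Tendsto (fun δ : ℝ => (ψ₂ i x₀ - M) / δ) (nhdsWithin 0 (Set.Ioi 0)) atBot := by
      simp only [div_eq_mul_inv]
      exact tendsto_inv_nhdsGT_zero.const_mul_atTop_of_neg hlt
    have h2 : Tendsto (fun δ : ℝ => (ψ₂ i (x₀ + δ • v) - ψ₂ i x₀) / δ + (ψ₂ i x₀ - M) / δ)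
        (nhdsWithin 0 (Set.Ioi 0)) atBot := (hL i).add_atBot h1
    apply h2.congr
    intro δ
    rw [← add_div]
    show _ = (ψ₂ i (x₀ + δ • v) - M) / δ
    ring_nf
  -- eventually, every q i is bounded by sup' over A
  have hbdd : ∀ i, ∀ᶠ δ in nhdsWithin 0 (Set.Ioi 0), q i δ ≤ A.sup' hAne (fun j => q j δ) := by
    intro i
    by_cases hi : i ∈ A
    · exact Filter.Eventually.of_forall fun δ => Finset.le_sup' (fun j => q j δ) hi
    · have h1 : ∀ᶠ δ in nhdsWithin 0 (Set.Ioi 0), q i δ < L i₀ - 1 :=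
        (hout i hi).eventually_lt_atBot _
      have h2 : ∀ᶠ δ in nhdsWithin 0 (Set.Ioi 0), L i₀ - 1 < q i₀ δ :=
        (hqA i₀ hi₀).eventually (eventually_gt_nhds (by linarith))
      filter_upwards [h1, h2] with δ hδ1 hδ2
      exact le_trans (le_of_lt (lt_trans hδ1 hδ2)) (Finset.le_sup' (fun j => q j δ) hi₀)
  have hall : ∀ᶠ δ in nhdsWithin 0 (Set.Ioi 0),
      ∀ i, q i δ ≤ A.sup' hAne (fun j => q j δ) := eventually_all.mpr hbdd
  -- eventual equality of the difference quotient with sup' over A of q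
  have heq : ∀ᶠ δ in nhdsWithin 0 (Set.Ioi 0),
      A.sup' hAne (fun j => q j δ) =
        ((fun x => finMax hk fun i => ψ₂ i x) (x₀ + δ • v) -
          (fun x => finMax hk fun i => ψ₂ i x) x₀) / δ := by
    filter_upwards [hall, self_mem_nhdsWithin] with δ hδ (hδpos : δ ∈ Set.Ioi 0)
    have hδ0 : (0:ℝ) < δ := hδpos
    show A.sup' hAne (fun j => q j δ) = ((finMax hk fun i => ψ₂ i (x₀ + δ • v)) - M) / δ
    rw [finMax_sub_div hk _ M δ hδ0]
    refine le_antisymm (Finset.sup'_le _ _ fun i hi => ?_) (Finset.sup'_le _ _ fun i _ => hδ i)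
    exact Finset.le_sup' (f := fun i => q i δ) (Finset.mem_univ i)
  exact hsupA.congr' heq

/-- Lemma 1: for `ψ = ψ₁ - max_i ψ₂ᵢ` with all pieces directionally differentiable on an
open set `Ω` containing the closed convex set `X`, a point `x₀ ∈ X` is d-stationary for
`ψ` on `X` iff it is d-stationary for `ψ₁ - ψ₂ᵢ` on `X` for every `i` in the argmax. -/
theorem stmt_0 {n k₂ : ℕ} (hk : 0 < k₂)
    (Ω X : Set (Fin n → ℝ)) (hΩ : IsOpen Ω) (hXΩ : X ⊆ Ω)
    (hXclosed : IsClosed X) (hXconv : Convex ℝ X)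
    (ψ₁ : (Fin n → ℝ) → ℝ) (ψ₂ : Fin k₂ → (Fin n → ℝ) → ℝ)
    (hdd₁ : ∀ x ∈ Ω, ∀ v, ∃ L, HasDirDeriv ψ₁ x v L)
    (hdd₂ : ∀ i, ∀ x ∈ Ω, ∀ v, ∃ L, HasDirDeriv (ψ₂ i) x v L)
    (ψ : (Fin n → ℝ) → ℝ)
    (hψ : ∀ x, ψ x = ψ₁ x - finMax hk (fun i => ψ₂ i x))
    (x₀ : Fin n → ℝ) (hx₀ : x₀ ∈ X) :
    DStat ψ X x₀ ↔
      ∀ i : Fin k₂, (∀ j, ψ₂ j x₀ ≤ ψ₂ i x₀) →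
        DStat (fun x => ψ₁ x - ψ₂ i x) X x₀ := by
  classical
  have hx₀Ω : x₀ ∈ Ω := hXΩ hx₀
  set A : Finset (Fin k₂) := Finset.univ.filter fun i => ∀ j, ψ₂ j x₀ ≤ ψ₂ i x₀ with hA
  have hAne : A.Nonempty := by
    have hune : (Finset.univ : Finset (Fin k₂)).Nonempty := Finset.univ_nonempty_iff.mpr ⟨⟨0, hk⟩⟩
    obtain ⟨i, _, hi⟩ := Finset.exists_max_image Finset.univ (fun i => ψ₂ i x₀) hune
    exact ⟨i, by simp [hA, fun j => hi j (Finset.mem_univ j)]⟩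
  -- choose directional derivatives
  have hψeq : ψ = fun x => ψ₁ x - finMax hk (fun i => ψ₂ i x) := funext hψ
  constructor
  · rintro ⟨-, hstat⟩ i hi
    refine ⟨hx₀, fun x hx => ?_⟩
    obtain ⟨L₁, hL₁⟩ := hdd₁ x₀ hx₀Ω (x - x₀)
    choose L hL using fun j => hdd₂ j x₀ hx₀Ω (x - x₀)
    refine ⟨L₁ - L i, hasDirDeriv_sub hL₁ (hL i), ?_⟩
    obtain ⟨L', hL', hL'0⟩ := hstat x hx
    have hmax := hasDirDeriv_finMax hk ψ₂ x₀ (x - x₀) L hL A hA hAne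
    have hψd : HasDirDeriv ψ x₀ (x - x₀) (L₁ - A.sup' hAne L) := by
      rw [hψeq]; exact hasDirDeriv_sub hL₁ hmax
    have := hasDirDeriv_unique hL' hψd
    have hle : L i ≤ A.sup' hAne L :=
      Finset.le_sup' _ (by simp [hA, hi])
    linarith
  · intro h
    refine ⟨hx₀, fun x hx => ?_⟩
    obtain ⟨L₁, hL₁⟩ := hdd₁ x₀ hx₀Ω (x - x₀)
    choose L hL using fun j => hdd₂ j x₀ hx₀Ω (x - x₀)
    have hmax := hasDirDeriv_finMax hk ψ₂ x₀ (x - x₀) L hL A hA hAne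
    refine ⟨L₁ - A.sup' hAne L, ?_, ?_⟩
    · rw [hψeq]; exact hasDirDeriv_sub hL₁ hmax
    · have hsup : A.sup' hAne L ≤ L₁ := by
        apply Finset.sup'_le
        intro i hiA
        have hi : ∀ j, ψ₂ j x₀ ≤ ψ₂ i x₀ := by
          rw [hA, Finset.mem_filter] at hiA; exact hiA.2
        obtain ⟨-, hstat⟩ := h i hi
        obtain ⟨L', hL', hL'0⟩ := hstat x hx
        have := hasDirDeriv_unique hL' (hasDirDeriv_sub hL₁ (hL i))
        linarith
      linarith
end

section
/- Let X ⊆ ℝⁿ be a polyhedral set and let ψ : X → ℝ be a continuous piecewise linear-quadratic function on X. Then the set ψ(D_{(ψ,X)}) of d-stationary values of ψ on X is finite. -/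
open Matrix Filter Topology

/-- A polyhedral subset of ℝⁿ: solution set of finitely many linear inequalities. -/
def IsPolyhedral {n : ℕ} (X : Set (Fin n → ℝ)) : Prop :=
  ∃ (m : ℕ) (A : Fin m → Fin n → ℝ) (b : Fin m → ℝ), X = {x | ∀ i, A i ⬝ᵥ x ≤ b i}


/-- A quadratic function on ℝⁿ: x ↦ (1/2)xᵀQx + qᵀx + α with Q symmetric. -/
def IsQuadraticFn {n : ℕ} (f : (Fin n → ℝ) → ℝ) : Prop :=
  ∃ (Q : Matrix (Fin n) (Fin n) ℝ) (q : Fin n → ℝ) (α : ℝ), Q.IsSymm ∧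
    ∀ x, f x = (1/2) * (x ⬝ᵥ Q.mulVec x) + q ⬝ᵥ x + α


/-- `ψ` is piecewise linear-quadratic on `X`: `X` is a union of finitely many polyhedral
sets on each of which `ψ` coincides with a quadratic function. -/
def IsPLQOn {n : ℕ} (ψ : (Fin n → ℝ) → ℝ) (X : Set (Fin n → ℝ)) : Prop :=
  ∃ (k : ℕ) (C : Fin k → Set (Fin n → ℝ)) (f : Fin k → (Fin n → ℝ) → ℝ),
    (∀ i, IsPolyhedral (C i)) ∧ (∀ i, IsQuadraticFn (f i)) ∧
    X = ⋃ i, C i ∧ ∀ i, Set.EqOn ψ (f i) (C i)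

/- ### Auxiliary lemmas -/

lemma symm_dot {n : ℕ} {Q : Matrix (Fin n) (Fin n) ℝ} (hQ : Q.IsSymm)
    (u w : Fin n → ℝ) : u ⬝ᵥ Q.mulVec w = w ⬝ᵥ Q.mulVec u := by
  rw [Matrix.dotProduct_mulVec, ← Matrix.mulVec_transpose, hQ.eq, dotProduct_comm]

lemma quad_expand {n : ℕ} {Q : Matrix (Fin n) (Fin n) ℝ} (hQ : Q.IsSymm)
    (q : Fin n → ℝ) (α : ℝ) (x v : Fin n → ℝ) (δ : ℝ) :
    (1/2) * ((x + δ • v) ⬝ᵥ Q.mulVec (x + δ • v)) + q ⬝ᵥ (x + δ • v) + α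
      = ((1/2) * (x ⬝ᵥ Q.mulVec x) + q ⬝ᵥ x + α)
        + δ * ((Q.mulVec x + q) ⬝ᵥ v) + δ^2 * ((1/2) * (v ⬝ᵥ Q.mulVec v)) := by
  have h := symm_dot hQ x v
  have h2 : Q.mulVec x ⬝ᵥ v = v ⬝ᵥ Q.mulVec x := dotProduct_comm _ _
  simp only [Matrix.mulVec_add, Matrix.mulVec_smul, dotProduct_add,
    add_dotProduct, dotProduct_smul, smul_dotProduct, smul_eq_mul]
  rw [h2]
  linear_combination (δ/2) * h

lemma quad_dirderiv {n : ℕ} {Q : Matrix (Fin n) (Fin n) ℝ} (hQ : Q.IsSymm)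
    {q : Fin n → ℝ} {α : ℝ} {f : (Fin n → ℝ) → ℝ}
    (hf : ∀ y, f y = (1/2) * (y ⬝ᵥ Q.mulVec y) + q ⬝ᵥ y + α) (x v : Fin n → ℝ) :
    HasDirDeriv f x v ((Q.mulVec x + q) ⬝ᵥ v) := by
  unfold HasDirDeriv
  simp only [hf]
  set c := (Q.mulVec x + q) ⬝ᵥ v with hc
  set e := (1/2) * (v ⬝ᵥ Q.mulVec v) with he
  have key : ∀ δ ∈ Set.Ioi (0:ℝ),
      (((1/2) * ((x + δ • v) ⬝ᵥ Q.mulVec (x + δ • v)) + q ⬝ᵥ (x + δ • v) + α)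
        - ((1/2) * (x ⬝ᵥ Q.mulVec x) + q ⬝ᵥ x + α)) / δ = c + δ * e := by
    intro δ hδ
    have hδ' : (δ:ℝ) ≠ 0 := ne_of_gt hδ
    rw [quad_expand hQ q α x v δ, ← hc, ← he]
    field_simp
    ring
  have h2 : Tendsto (fun δ : ℝ => c + δ * e) (nhdsWithin 0 (Set.Ioi 0)) (nhds c) := by
    have : Tendsto (fun δ : ℝ => c + δ * e) (nhds 0) (nhds (c + 0 * e)) :=
      (continuous_const.add (continuous_id.mul continuous_const)).tendsto 0
    simpa using this.mono_left nhdsWithin_le_nhds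
  refine h2.congr' ?_
  filter_upwards [self_mem_nhdsWithin] with δ hδ
  exact (key δ hδ).symm

lemma ev_mem {n m : ℕ} (A : Fin m → Fin n → ℝ) (b : Fin m → ℝ) (x v : Fin n → ℝ)
    (hx : ∀ j, A j ⬝ᵥ x ≤ b j) (hv : ∀ j, A j ⬝ᵥ x = b j → A j ⬝ᵥ v = 0) :
    ∀ᶠ δ : ℝ in nhdsWithin 0 (Set.Ioi 0), ∀ j, A j ⬝ᵥ (x + δ • v) ≤ b j := by
  rw [eventually_all]
  intro j
  have hexp : ∀ δ : ℝ, A j ⬝ᵥ (x + δ • v) = A j ⬝ᵥ x + δ * (A j ⬝ᵥ v) := by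
    intro δ
    simp [dotProduct_add, dotProduct_smul, smul_eq_mul]
  rcases eq_or_lt_of_le (hx j) with heq | hlt
  · filter_upwards with δ
    rw [hexp, hv j heq, mul_zero, add_zero]
    exact hx j
  · have hcont : Tendsto (fun δ : ℝ => A j ⬝ᵥ (x + δ • v)) (nhdsWithin 0 (Set.Ioi 0))
        (nhds (A j ⬝ᵥ x)) := by
      have : Tendsto (fun δ : ℝ => A j ⬝ᵥ x + δ * (A j ⬝ᵥ v)) (nhds 0)
          (nhds (A j ⬝ᵥ x + 0 * (A j ⬝ᵥ v))) :=
        (continuous_const.add (continuous_id.mul continuous_const)).tendsto 0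
      simp only [zero_mul, add_zero] at this
      exact (this.mono_left nhdsWithin_le_nhds).congr (fun δ => (hexp δ).symm)
    exact (hcont.eventually_lt_const hlt).mono fun δ h => le_of_lt h

lemma dirderiv_congr {n : ℕ} {ψ f : (Fin n → ℝ) → ℝ} {x v : Fin n → ℝ} {L : ℝ}
    (hev : ∀ᶠ δ : ℝ in nhdsWithin 0 (Set.Ioi 0), ψ (x + δ • v) = f (x + δ • v))
    (hx : ψ x = f x) (hf : HasDirDeriv f x v L) : HasDirDeriv ψ x v L := by
  refine hf.congr' ?_
  filter_upwards [hev] with δ h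
  rw [h, hx]

lemma grad_nonneg {n m : ℕ} {X : Set (Fin n → ℝ)} {ψ f : (Fin n → ℝ) → ℝ}
    {Q : Matrix (Fin n) (Fin n) ℝ} {q : Fin n → ℝ} {α : ℝ}
    (A : Fin m → Fin n → ℝ) (b : Fin m → ℝ)
    (hQ : Q.IsSymm) (hf : ∀ y, f y = (1/2) * (y ⬝ᵥ Q.mulVec y) + q ⬝ᵥ y + α)
    (hCX : {z | ∀ j, A j ⬝ᵥ z ≤ b j} ⊆ X)
    (hEq : Set.EqOn ψ f {z | ∀ j, A j ⬝ᵥ z ≤ b j})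
    (x : Fin n → ℝ) (hxC : ∀ j, A j ⬝ᵥ x ≤ b j) (hstat : DStat ψ X x)
    (v : Fin n → ℝ) (hv : ∀ j, A j ⬝ᵥ x = b j → A j ⬝ᵥ v = 0) :
    0 ≤ (Q.mulVec x + q) ⬝ᵥ v := by
  have hev := ev_mem A b x v hxC hv
  obtain ⟨δ₀, hmem, hδ₀⟩ := (hev.and self_mem_nhdsWithin).exists
  set z := x + δ₀ • v with hz
  have hzC : ∀ j, A j ⬝ᵥ z ≤ b j := hmem
  have hzX : z ∈ X := hCX hzC
  obtain ⟨L, hL, hL0⟩ := hstat.2 z hzX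
  have hzx : z - x = δ₀ • v := by rw [hz]; abel
  rw [hzx] at hL
  have hv' : ∀ j, A j ⬝ᵥ x = b j → A j ⬝ᵥ (δ₀ • v) = 0 := by
    intro j hj
    rw [dotProduct_smul, hv j hj, smul_zero]
  have hev' := ev_mem A b x (δ₀ • v) hxC hv'
  have hψev : ∀ᶠ δ : ℝ in nhdsWithin 0 (Set.Ioi 0),
      ψ (x + δ • (δ₀ • v)) = f (x + δ • (δ₀ • v)) := by
    filter_upwards [hev'] with δ h
    exact hEq h
  have hD : HasDirDeriv ψ x (δ₀ • v) ((Q.mulVec x + q) ⬝ᵥ (δ₀ • v)) :=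
    dirderiv_congr hψev (hEq hxC) (quad_dirderiv hQ hf x (δ₀ • v))
  have huniq : L = (Q.mulVec x + q) ⬝ᵥ (δ₀ • v) := tendsto_nhds_unique hL hD
  rw [huniq, dotProduct_smul, smul_eq_mul] at hL0
  exact nonneg_of_mul_nonneg_right hL0 hδ₀

lemma grad_zero {n m : ℕ} {X : Set (Fin n → ℝ)} {ψ f : (Fin n → ℝ) → ℝ}
    {Q : Matrix (Fin n) (Fin n) ℝ} {q : Fin n → ℝ} {α : ℝ}
    (A : Fin m → Fin n → ℝ) (b : Fin m → ℝ)
    (hQ : Q.IsSymm) (hf : ∀ y, f y = (1/2) * (y ⬝ᵥ Q.mulVec y) + q ⬝ᵥ y + α)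
    (hCX : {z | ∀ j, A j ⬝ᵥ z ≤ b j} ⊆ X)
    (hEq : Set.EqOn ψ f {z | ∀ j, A j ⬝ᵥ z ≤ b j})
    (x : Fin n → ℝ) (hxC : ∀ j, A j ⬝ᵥ x ≤ b j) (hstat : DStat ψ X x)
    (v : Fin n → ℝ) (hv : ∀ j, A j ⬝ᵥ x = b j → A j ⬝ᵥ v = 0) :
    (Q.mulVec x + q) ⬝ᵥ v = 0 := by
  have h1 := grad_nonneg A b hQ hf hCX hEq x hxC hstat v hv
  have hv' : ∀ j, A j ⬝ᵥ x = b j → A j ⬝ᵥ (-v) = 0 := by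
    intro j hj
    rw [dotProduct_neg, hv j hj, neg_zero]
  have h2 := grad_nonneg A b hQ hf hCX hEq x hxC hstat (-v) hv'
  rw [dotProduct_neg] at h2
  linarith

lemma quad_diff {n : ℕ} {Q : Matrix (Fin n) (Fin n) ℝ} (hQ : Q.IsSymm)
    {q : Fin n → ℝ} {α : ℝ} {f : (Fin n → ℝ) → ℝ}
    (hf : ∀ y, f y = (1/2) * (y ⬝ᵥ Q.mulVec y) + q ⬝ᵥ y + α) (x y : Fin n → ℝ) :
    f y - f x = (1/2) * ((Q.mulVec x + q) ⬝ᵥ (y - x) + (Q.mulVec y + q) ⬝ᵥ (y - x)) := by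
  have h := symm_dot hQ x y
  have d1 : (Q.mulVec x) ⬝ᵥ y = y ⬝ᵥ Q.mulVec x := dotProduct_comm _ _
  have d2 : (Q.mulVec x) ⬝ᵥ x = x ⬝ᵥ Q.mulVec x := dotProduct_comm _ _
  have d3 : (Q.mulVec y) ⬝ᵥ x = x ⬝ᵥ Q.mulVec y := dotProduct_comm _ _
  have d4 : (Q.mulVec y) ⬝ᵥ y = y ⬝ᵥ Q.mulVec y := dotProduct_comm _ _
  rw [hf, hf]
  simp only [add_dotProduct, sub_dotProduct, dotProduct_sub, d1, d2, d3, d4]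
  linear_combination (1/2) * h

/-- Two d-stationary points lying in a common polyhedral piece with equal active sets
have the same `ψ`-value. -/
lemma same_value {n m : ℕ} {X : Set (Fin n → ℝ)} {ψ f : (Fin n → ℝ) → ℝ}
    {Q : Matrix (Fin n) (Fin n) ℝ} {q : Fin n → ℝ} {α : ℝ}
    (A : Fin m → Fin n → ℝ) (b : Fin m → ℝ)
    (hQ : Q.IsSymm) (hf : ∀ y, f y = (1/2) * (y ⬝ᵥ Q.mulVec y) + q ⬝ᵥ y + α)
    (hCX : {z | ∀ j, A j ⬝ᵥ z ≤ b j} ⊆ X)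
    (hEq : Set.EqOn ψ f {z | ∀ j, A j ⬝ᵥ z ≤ b j})
    (x y : Fin n → ℝ) (hxC : ∀ j, A j ⬝ᵥ x ≤ b j) (hyC : ∀ j, A j ⬝ᵥ y ≤ b j)
    (hx : DStat ψ X x) (hy : DStat ψ X y)
    (hact : ∀ j, A j ⬝ᵥ x = b j ↔ A j ⬝ᵥ y = b j) :
    ψ x = ψ y := by
  have hvx : ∀ j, A j ⬝ᵥ x = b j → A j ⬝ᵥ (y - x) = 0 := by
    intro j hj
    rw [dotProduct_sub, (hact j).mp hj, hj, sub_self]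
  have hvy : ∀ j, A j ⬝ᵥ y = b j → A j ⬝ᵥ (y - x) = 0 := by
    intro j hj
    rw [dotProduct_sub, hj, (hact j).mpr hj, sub_self]
  have g1 : (Q.mulVec x + q) ⬝ᵥ (y - x) = 0 :=
    grad_zero A b hQ hf hCX hEq x hxC hx (y - x) hvx
  have g2 : (Q.mulVec y + q) ⬝ᵥ (y - x) = 0 :=
    grad_zero A b hQ hf hCX hEq y hyC hy (y - x) hvy
  have hd := quad_diff hQ hf x y
  rw [g1, g2, add_zero, mul_zero] at hd
  have : f x = f y := by linarith
  rw [hEq hxC, hEq hyC, this]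

/-- Proposition 2(a): a continuous piecewise linear-quadratic function on a polyhedral
set has only finitely many d-stationary values. -/
theorem stmt_1 {n : ℕ} (X : Set (Fin n → ℝ)) (hX : IsPolyhedral X)
    (ψ : (Fin n → ℝ) → ℝ) (hcont : ContinuousOn ψ X) (hplq : IsPLQOn ψ X) :
    (ψ '' {x | DStat ψ X x}).Finite := by
  classical
  obtain ⟨k, C, f, hpoly, hquad, hXeq, hEqOn⟩ := hplq
  -- extract data for each piece
  choose m A b hC using hpoly
  choose Q qv αv hQ hf using hquad
  -- signature space
  let S := (i : Fin k) → Bool × (Fin (m i) → Bool)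
  haveI : Finite S := by infer_instance
  let σ : (Fin n → ℝ) → S := fun x i =>
    (decide (x ∈ C i), fun j => decide (A i j ⬝ᵥ x = b i j))
  -- key: equal signatures give equal values
  have key : ∀ x y, DStat ψ X x → DStat ψ X y → σ x = σ y → ψ x = ψ y := by
    intro x y hx hy hσ
    have hxX : x ∈ X := hx.1
    rw [hXeq] at hxX
    obtain ⟨i, hxC⟩ := Set.mem_iUnion.mp hxX
    have hσi := congrFun hσ i
    have h1 : (decide (x ∈ C i) : Bool) = decide (y ∈ C i) := congrArg Prod.fst hσi
    have h2 : (fun j => (decide (A i j ⬝ᵥ x = b i j) : Bool))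
        = fun j => decide (A i j ⬝ᵥ y = b i j) := congrArg Prod.snd hσi
    have hyC : y ∈ C i := by
      have : (decide (y ∈ C i) : Bool) = true := by
        rw [← h1]; exact decide_eq_true hxC
      exact of_decide_eq_true this
    have hact : ∀ j, A i j ⬝ᵥ x = b i j ↔ A i j ⬝ᵥ y = b i j := by
      intro j
      have := congrFun h2 j
      constructor
      · intro h
        apply of_decide_eq_true
        rw [← this]
        exact decide_eq_true h
      · intro h
        apply of_decide_eq_true
        rw [this]
        exact decide_eq_true h
    have hCX : {z | ∀ j, A i j ⬝ᵥ z ≤ b i j} ⊆ X := by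
      rw [hXeq, ← hC i]
      exact Set.subset_iUnion C i
    have hEqC : Set.EqOn ψ (f i) {z | ∀ j, A i j ⬝ᵥ z ≤ b i j} := by
      rw [← hC i]; exact hEqOn i
    have hxC' : ∀ j, A i j ⬝ᵥ x ≤ b i j := by rw [hC i] at hxC; exact hxC
    have hyC' : ∀ j, A i j ⬝ᵥ y ≤ b i j := by rw [hC i] at hyC; exact hyC
    exact same_value (A i) (b i) (hQ i) (hf i) hCX hEqC x y hxC' hyC' hx hy hact
  -- finiteness via finitely many signatures
  have hsub : ψ '' {x | DStat ψ X x} ⊆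
      ⋃ s : S, ψ '' ({x | DStat ψ X x} ∩ σ ⁻¹' {s}) := by
    rintro r ⟨x, hx, rfl⟩
    exact Set.mem_iUnion.mpr ⟨σ x, ⟨x, ⟨hx, rfl⟩, rfl⟩⟩
  refine Set.Finite.subset (Set.finite_iUnion fun s => ?_) hsub
  apply Set.Subsingleton.finite
  rintro r ⟨x, ⟨hx, hxs⟩, rfl⟩ r' ⟨y, ⟨hy, hys⟩, rfl⟩
  exact key x y hx hy (by rw [Set.mem_preimage, Set.mem_singleton_iff] at hxs hys; rw [hxs, hys])
end

section
/- Let X ⊆ ℝⁿ be a polyhedral set and let ψ(x) = ψ₁(x) − max_{1≤i≤k₂} ψ₂ᵢ(x), where ψ₁ : ℝⁿ → ℝ is convex and each ψ₂ᵢ : ℝⁿ → ℝ is concave (i = 1,…,k₂). Then the set ψ(D_{(ψ,X)}) of d-stationary values of ψ on X is finite; in fact it is contained in the finite set { inf_{x∈X} (ψ₁(x) − ψ₂ᵢ(x)) : i = 1,…,k₂ }. -/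
open Matrix Filter Topology

/-- Proposition 2(b): for `ψ = ψ₁ - max_i ψ₂ᵢ` with `ψ₁` convex and each `ψ₂ᵢ` concave,
the set of d-stationary values of `ψ` on a polyhedral set `X` is contained in the finite
set of values `inf_{x ∈ X} (ψ₁(x) - ψ₂ᵢ(x))`, `i = 1,…,k₂`; in particular it is finite. -/
theorem stmt_2 {n k₂ : ℕ} (hk : 0 < k₂) (X : Set (Fin n → ℝ)) (hX : IsPolyhedral X)
    (ψ₁ : (Fin n → ℝ) → ℝ) (ψ₂ : Fin k₂ → (Fin n → ℝ) → ℝ)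
    (hψ₁ : ConvexOn ℝ Set.univ ψ₁) (hψ₂ : ∀ i, ConcaveOn ℝ Set.univ (ψ₂ i))
    (ψ : (Fin n → ℝ) → ℝ)
    (hψ : ∀ x, ψ x = ψ₁ x - finMax hk (fun i => ψ₂ i x)) :
    ψ '' {x | DStat ψ X x} ⊆
        Set.range (fun i : Fin k₂ => sInf ((fun x => ψ₁ x - ψ₂ i x) '' X)) ∧
      (ψ '' {x | DStat ψ X x}).Finite := by
  have hne : (Finset.univ : Finset (Fin k₂)).Nonempty :=
    Finset.univ_nonempty_iff.mpr ⟨⟨0, hk⟩⟩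
  have hsub : ψ '' {x | DStat ψ X x} ⊆
      Set.range (fun i : Fin k₂ => sInf ((fun x => ψ₁ x - ψ₂ i x) '' X)) := by
    rintro _ ⟨xb, ⟨hxbX, hst⟩, rfl⟩
    obtain ⟨i, -, hi⟩ := Finset.exists_mem_eq_sup' hne (fun i => ψ₂ i xb)
    have hi' : finMax hk (fun i => ψ₂ i xb) = ψ₂ i xb := hi
    refine ⟨i, ?_⟩
    set φ : (Fin n → ℝ) → ℝ := fun y => ψ₁ y - ψ₂ i y with hφ
    have hφconv : ConvexOn ℝ Set.univ φ := hψ₁.sub (hψ₂ i)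
    have hmin : ∀ x ∈ X, φ xb ≤ φ x := by
      intro x hx
      obtain ⟨L, hL, hL0⟩ := hst x hx
      have key : ∀ᶠ δ in nhdsWithin (0:ℝ) (Set.Ioi 0),
          (ψ (xb + δ • (x - xb)) - ψ xb) / δ ≤ φ x - φ xb := by
        filter_upwards [Ioc_mem_nhdsGT_of_mem (Set.left_mem_Ico.mpr one_pos)] with δ hδ
        have hδ0 : 0 < δ := hδ.1
        rw [div_le_iff₀ hδ0]
        have h1 : ψ (xb + δ • (x - xb)) - ψ xb ≤ φ (xb + δ • (x - xb)) - φ xb := by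
          rw [hψ, hψ, hi']
          have hle : ψ₂ i (xb + δ • (x - xb)) ≤ finMax hk (fun j => ψ₂ j (xb + δ • (x - xb))) :=
            Finset.le_sup' (fun j => ψ₂ j (xb + δ • (x - xb))) (Finset.mem_univ i)
          simp only [hφ]
          linarith
        have h2 : φ (xb + δ • (x - xb)) - φ xb ≤ δ * (φ x - φ xb) := by
          have hc := hφconv.2 (Set.mem_univ xb) (Set.mem_univ x)
            (by linarith [hδ.2] : (0:ℝ) ≤ 1 - δ) hδ0.le (by ring)
          have heq : (1 - δ) • xb + δ • x = xb + δ • (x - xb) := by module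
          rw [heq] at hc
          simp only [smul_eq_mul] at hc
          nlinarith
        linarith
      have hLle := le_of_tendsto hL key
      linarith
    have hmem : φ xb ∈ (fun x => ψ₁ x - ψ₂ i x) '' X := ⟨xb, hxbX, rfl⟩
    have hinf : sInf ((fun x => ψ₁ x - ψ₂ i x) '' X) = φ xb := by
      apply le_antisymm
      · exact csInf_le ⟨φ xb, by rintro _ ⟨x, hx, rfl⟩; exact hmin x hx⟩ hmem
      · exact le_csInf ⟨_, hmem⟩ (by rintro _ ⟨x, hx, rfl⟩; exact hmin x hx)
    simp only [hinf, hψ, hi', hφ]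
  exact ⟨hsub, (Set.finite_range _).subset hsub⟩
end

section
/- Let X ⊆ ℝⁿ be a polyhedral set and let ψ(x) = ψ₁(x) + ψ₂(x), where ψ₁ : ℝⁿ → ℝ is convex and ψ₂ is a piecewise affine function, i.e., ψ₂(x) = max_{1≤i≤k₁}((aⁱ)ᵀx + αᵢ) − max_{1≤j≤k₂}((bʲ)ᵀx + βⱼ) for some vectors aⁱ, bʲ ∈ ℝⁿ and scalars αᵢ, βⱼ. Then the set ψ(D_{(ψ,X)}) of d-stationary values of ψ on X is finite. -/
open Matrix Filter Topology

lemma finMax_le_combo {n k : ℕ} (hk : 0 < k) (a : Fin k → Fin n → ℝ) (α : Fin k → ℝ)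
    (u v : Fin n → ℝ) {t s : ℝ} (ht : 0 ≤ t) (hs : 0 ≤ s) (hts : t + s = 1) :
    finMax hk (fun i => a i ⬝ᵥ (t • u + s • v) + α i) ≤
      t * finMax hk (fun i => a i ⬝ᵥ u + α i) + s * finMax hk (fun i => a i ⬝ᵥ v + α i) := by
  apply Finset.sup'_le
  intro i _
  have h1 : a i ⬝ᵥ (t • u + s • v) + α i
      = t * (a i ⬝ᵥ u + α i) + s * (a i ⬝ᵥ v + α i) := by
    rw [dotProduct_add, dotProduct_smul, dotProduct_smul]
    simp only [smul_eq_mul]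
    linear_combination (-(α i)) * hts
  rw [h1]
  have h2 : (a i ⬝ᵥ u + α i) ≤ finMax hk (fun i => a i ⬝ᵥ u + α i) := by
    unfold finMax
    exact Finset.le_sup' (fun i => a i ⬝ᵥ u + α i) (Finset.mem_univ i)
  have h3 : (a i ⬝ᵥ v + α i) ≤ finMax hk (fun i => a i ⬝ᵥ v + α i) := by
    unfold finMax
    exact Finset.le_sup' (fun i => a i ⬝ᵥ v + α i) (Finset.mem_univ i)
  nlinarith

/-- Proposition 2(c): for `ψ = ψ₁ + ψ₂` with `ψ₁` convex and `ψ₂` piecewise affine in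
difference-max form, the set of d-stationary values of `ψ` on a polyhedral set is finite. -/
theorem stmt_3 {n k₁ k₂ : ℕ} (hk₁ : 0 < k₁) (hk₂ : 0 < k₂)
    (X : Set (Fin n → ℝ)) (hX : IsPolyhedral X)
    (ψ₁ : (Fin n → ℝ) → ℝ) (hψ₁ : ConvexOn ℝ Set.univ ψ₁)
    (a : Fin k₁ → Fin n → ℝ) (α : Fin k₁ → ℝ)
    (b : Fin k₂ → Fin n → ℝ) (β : Fin k₂ → ℝ)
    (ψ₂ : (Fin n → ℝ) → ℝ)
    (hψ₂ : ∀ x, ψ₂ x = finMax hk₁ (fun i => a i ⬝ᵥ x + α i)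
                        - finMax hk₂ (fun j => b j ⬝ᵥ x + β j))
    (ψ : (Fin n → ℝ) → ℝ) (hψ : ∀ x, ψ x = ψ₁ x + ψ₂ x) :
    (ψ '' {x | DStat ψ X x}).Finite := by
  -- abbreviations
  set M : (Fin n → ℝ) → ℝ := fun x => finMax hk₁ (fun i => a i ⬝ᵥ x + α i) with hM
  set N : (Fin n → ℝ) → ℝ := fun x => finMax hk₂ (fun j => b j ⬝ᵥ x + β j) with hN
  set φ : Fin k₂ → (Fin n → ℝ) → ℝ := fun j x => ψ₁ x + M x - (b j ⬝ᵥ x + β j) with hφ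
  have hMx : ∀ x, M x = finMax hk₁ (fun i => a i ⬝ᵥ x + α i) := fun _ => rfl
  have hNx : ∀ x, N x = finMax hk₂ (fun j => b j ⬝ᵥ x + β j) := fun _ => rfl
  have hφx : ∀ j x, φ j x = ψ₁ x + M x - (b j ⬝ᵥ x + β j) := fun _ _ => rfl
  have hψMN : ∀ x, ψ x = ψ₁ x + M x - N x := by
    intro x; rw [hψ, hψ₂, ← hMx, ← hNx]; ring
  -- ψ ≤ φ j everywhere, with equality where j is active
  have hψle : ∀ j x, ψ x ≤ φ j x := by
    intro j x
    have : (b j ⬝ᵥ x + β j) ≤ N x := by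
      rw [hNx]; unfold finMax
      exact Finset.le_sup' (fun j => b j ⬝ᵥ x + β j) (Finset.mem_univ j)
    rw [hψMN, hφx]
    linarith
  -- key lemma: if xb is d-stationary and j is active at xb, then φ j xb ≤ φ j y for all y ∈ X
  have key : ∀ (j : Fin k₂) (xb y : Fin n → ℝ), DStat ψ X xb → y ∈ X →
      N xb = b j ⬝ᵥ xb + β j → φ j xb ≤ φ j y := by
    intro j xb y hst hy hact
    obtain ⟨L, hL, hL0⟩ := hst.2 y hy
    have hψeq : ψ xb = φ j xb := by
      rw [hψMN, hφx, hact]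
    -- difference quotient bound on (0,1]
    have hbound : ∀ δ : ℝ, δ ∈ Set.Ioc (0:ℝ) 1 →
        (ψ (xb + δ • (y - xb)) - ψ xb) / δ ≤ φ j y - φ j xb := by
      intro δ hδ
      obtain ⟨hδ0, hδ1⟩ := hδ
      set z : Fin n → ℝ := xb + δ • (y - xb) with hz
      have hzconv : z = (1 - δ) • xb + δ • y := by
        funext i; simp [hz]; ring
      have h1 : ψ₁ z ≤ (1 - δ) * ψ₁ xb + δ * ψ₁ y := by
        have := hψ₁.2 (Set.mem_univ xb) (Set.mem_univ y) (by linarith : (0:ℝ) ≤ 1 - δ)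
          hδ0.le (by ring)
        simpa [hzconv, smul_eq_mul] using this
      have h2 : M z ≤ (1 - δ) * M xb + δ * M y := by
        rw [hMx, hMx, hMx, hzconv]
        exact finMax_le_combo hk₁ a α xb y (by linarith) hδ0.le (by ring)
      have h3 : b j ⬝ᵥ z + β j = (1 - δ) * (b j ⬝ᵥ xb + β j) + δ * (b j ⬝ᵥ y + β j) := by
        rw [hzconv, dotProduct_add, dotProduct_smul, dotProduct_smul]
        simp only [smul_eq_mul]; ring
      have hφz : φ j z ≤ (1 - δ) * φ j xb + δ * φ j y := by
        rw [hφx, hφx, hφx, h3]; linarith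
      have hψz : ψ z ≤ φ j z := hψle j z
      rw [div_le_iff₀ hδ0]
      calc ψ z - ψ xb ≤ φ j z - φ j xb := by linarith [hψeq]
        _ ≤ (1 - δ) * φ j xb + δ * φ j y - φ j xb := by linarith
        _ = (φ j y - φ j xb) * δ := by ring
    have hev : ∀ᶠ δ in nhdsWithin (0:ℝ) (Set.Ioi 0),
        (ψ (xb + δ • (y - xb)) - ψ xb) / δ ≤ φ j y - φ j xb := by
      filter_upwards [Ioc_mem_nhdsGT_of_mem (by simp : (0:ℝ) ∈ Set.Ico (0:ℝ) 1)] with δ hδ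
      exact hbound δ hδ
    have : L ≤ φ j y - φ j xb := le_of_tendsto hL hev
    linarith
  -- the set of values is covered by at most k₂ singleton-like sets
  have hsub : ψ '' {x | DStat ψ X x} ⊆
      ⋃ j : Fin k₂, {c | ∃ xb, DStat ψ X xb ∧ N xb = b j ⬝ᵥ xb + β j ∧ ψ xb = c} := by
    rintro c ⟨xb, hst, rfl⟩
    obtain ⟨j, _, hj⟩ := Finset.exists_mem_eq_sup' (Finset.univ_nonempty_iff.mpr ⟨⟨0, hk₂⟩⟩)
      (fun j => b j ⬝ᵥ xb + β j)
    exact Set.mem_iUnion.2 ⟨j, xb, hst, hj, rfl⟩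
  apply Set.Finite.subset _ hsub
  apply Set.finite_iUnion
  intro j
  apply Set.Subsingleton.finite
  rintro c ⟨xb, hstx, hactx, rfl⟩ c' ⟨yb, hsty, hacty, rfl⟩
  have h1 : φ j xb ≤ φ j yb := key j xb yb hstx hsty.1 hactx
  have h2 : φ j yb ≤ φ j xb := key j yb xb hsty hstx.1 hacty
  have e1 : ψ xb = φ j xb := by rw [hψMN, hφx, hactx]
  have e2 : ψ yb = φ j yb := by rw [hψMN, hφx, hacty]
  rw [e1, e2]; linarith
end

section
/- Let X ⊆ ℝⁿ be a polyhedral set and ψ(x) = max_{1≤i≤k₁} ψ₁ᵢ(x) − max_{1≤j≤k₂} ψ₂ⱼ(x), where every ψ₁ᵢ and ψ₂ⱼ is a quadratic function. For an arbitrary tuple c = (cⁱ)_{i=1}^{k₁} of vectors in ℝⁿ, let S_c = { x ∈ X : the vector ∇ψ₁ᵢ(x) + cⁱ is the same for all i ∈ argmax_{1≤i≤k₁} ψ₁ᵢ(x) }. Then the set ψ(S_c ∩ D_{(ψ,X)}) is finite. -/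
open Matrix Filter Topology

lemma dotSymm {n : ℕ} (Q : Matrix (Fin n) (Fin n) ℝ) (hQ : Q.IsSymm) (x v : Fin n → ℝ) :
    x ⬝ᵥ Q.mulVec v = v ⬝ᵥ Q.mulVec x := by
  rw [Matrix.dotProduct_mulVec, ← Matrix.mulVec_transpose, hQ.eq, dotProduct_comm]

lemma quadExpand {n : ℕ} (Q : Matrix (Fin n) (Fin n) ℝ) (hQ : Q.IsSymm)
    (q : Fin n → ℝ) (α : ℝ) (x v : Fin n → ℝ) (δ : ℝ) :
    (1/2) * ((x + δ • v) ⬝ᵥ Q.mulVec (x + δ • v)) + q ⬝ᵥ (x + δ • v) + α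
      = ((1/2) * (x ⬝ᵥ Q.mulVec x) + q ⬝ᵥ x + α)
        + (δ * ((Q.mulVec x + q) ⬝ᵥ v) + δ^2 * ((1/2) * (v ⬝ᵥ Q.mulVec v))) := by
  have h := dotSymm Q hQ x v
  simp only [Matrix.mulVec_add, Matrix.mulVec_smul, dotProduct_add, add_dotProduct,
    dotProduct_smul, smul_dotProduct, smul_eq_mul, add_dotProduct]
  rw [h, dotProduct_comm (Q.mulVec x) v]
  ring

lemma quadDiff {n : ℕ} (Q : Matrix (Fin n) (Fin n) ℝ) (hQ : Q.IsSymm)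
    (q : Fin n → ℝ) (α : ℝ) (x y : Fin n → ℝ) :
    ((1/2) * (y ⬝ᵥ Q.mulVec y) + q ⬝ᵥ y + α) - ((1/2) * (x ⬝ᵥ Q.mulVec x) + q ⬝ᵥ x + α)
      = (1/2) * (((Q.mulVec x + q) ⬝ᵥ (y - x)) + ((Q.mulVec y + q) ⬝ᵥ (y - x))) := by
  have h1 : Q.mulVec x ⬝ᵥ y = x ⬝ᵥ Q.mulVec y := by
    rw [dotProduct_comm]; exact dotSymm Q hQ y x
  have h2 : Q.mulVec y ⬝ᵥ x = x ⬝ᵥ Q.mulVec y := by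
    rw [dotProduct_comm]
  have h3 : Q.mulVec x ⬝ᵥ x = x ⬝ᵥ Q.mulVec x := dotProduct_comm _ _
  have h4 : Q.mulVec y ⬝ᵥ y = y ⬝ᵥ Q.mulVec y := dotProduct_comm _ _
  simp only [dotProduct_sub, add_dotProduct, h1, h2, h3, h4]
  rw [dotProduct_comm q y, dotProduct_comm q x]
  ring

lemma tendstoSup' {ι : Type*} (s : Finset ι) (hs : s.Nonempty) (f : ι → ℝ → ℝ) (a : ι → ℝ)
    (l : Filter ℝ) (h : ∀ i ∈ s, Tendsto (f i) l (nhds (a i))) :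
    Tendsto (fun δ => s.sup' hs (fun i => f i δ)) l (nhds (s.sup' hs a)) := by
  induction hs using Finset.Nonempty.cons_induction with
  | singleton i => simpa using h i (by simp)
  | cons i s hi hs ih =>
      simp only [Finset.sup'_cons hs]
      exact (h i (by simp)).max (ih (fun j hj => h j (Finset.mem_cons_of_mem hj)))

lemma finMax_eq_of_argmax {k : ℕ} (hk : 0 < k) (f : Fin k → ℝ) (i : Fin k)
    (hi : ∀ j, f j ≤ f i) : finMax hk f = f i :=
  le_antisymm (Finset.sup'_le _ f (fun j _ => hi j)) (Finset.le_sup' f (Finset.mem_univ i))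

lemma hddMax {n k : ℕ} (hk : 0 < k)
    (Q : Fin k → Matrix (Fin n) (Fin n) ℝ) (q : Fin k → Fin n → ℝ) (α : Fin k → ℝ)
    (hQ : ∀ i, (Q i).IsSymm)
    (ψ : Fin k → (Fin n → ℝ) → ℝ)
    (hψ : ∀ i x, ψ i x = (1/2) * (x ⬝ᵥ (Q i).mulVec x) + q i ⬝ᵥ x + α i)
    (x v : Fin n → ℝ) (I : Finset (Fin k)) (hI : I.Nonempty)
    (hIdef : ∀ i, i ∈ I ↔ ∀ j, ψ j x ≤ ψ i x) :
    Tendsto (fun δ : ℝ => (finMax hk (fun i => ψ i (x + δ • v)) - finMax hk (fun i => ψ i x)) / δ)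
      (nhdsWithin 0 (Set.Ioi 0)) (nhds (I.sup' hI (fun i => ((Q i).mulVec x + q i) ⬝ᵥ v))) := by
  set b : Fin k → ℝ := fun i => ((Q i).mulVec x + q i) ⬝ᵥ v with hb
  set e : Fin k → ℝ := fun i => (1/2) * (v ⬝ᵥ (Q i).mulVec v) with he
  have expand : ∀ i δ, ψ i (x + δ • v) = ψ i x + (δ * b i + δ^2 * e i) := by
    intro i δ
    rw [hψ, hψ, quadExpand (Q i) (hQ i) (q i) (α i) x v δ]
  set M := finMax hk (fun i => ψ i x) with hM
  have hMact : ∀ i ∈ I, ψ i x = M := by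
    intro i hi
    exact (finMax_eq_of_argmax hk _ i ((hIdef i).1 hi)).symm
  have hcont : ∀ (i : Fin k), Tendsto (fun δ : ℝ => ψ i (x + δ • v)) (nhds 0) (nhds (ψ i x)) := by
    intro i
    have hc : Continuous (fun δ : ℝ => ψ i x + (δ * b i + δ^2 * e i)) := by fun_prop
    have : Tendsto (fun δ : ℝ => ψ i x + (δ * b i + δ^2 * e i)) (nhds 0) (nhds (ψ i x)) := by
      simpa using hc.tendsto 0
    exact this.congr (fun δ => (expand i δ).symm)
  have hsupcont : Tendsto (fun δ : ℝ => I.sup' hI (fun i => ψ i (x + δ • v))) (nhds 0)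
      (nhds M) := by
    have := tendstoSup' I hI (fun i δ => ψ i (x + δ • v)) (fun i => ψ i x) (nhds 0)
      (fun i _ => hcont i)
    have heq : I.sup' hI (fun i => ψ i x) = M := by
      obtain ⟨i0, hi0⟩ := hI
      apply le_antisymm
      · exact Finset.sup'_le _ _ (fun i hi => (hMact i hi).le)
      · rw [← hMact i0 hi0]; exact Finset.le_sup' (fun i => ψ i x) hi0
    rwa [heq] at this
  have hev : ∀ᶠ δ in nhds (0:ℝ), ∀ i, ψ i (x + δ • v) ≤ I.sup' hI (fun i' => ψ i' (x + δ • v)) := by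
    rw [eventually_all]
    intro i
    by_cases hi : i ∈ I
    · exact Filter.Eventually.of_forall (fun δ => Finset.le_sup' (fun i' => ψ i' (x + δ • v)) hi)
    · have hlt : ψ i x < M := by
        have := (hIdef i).not.1 hi
        push_neg at this
        obtain ⟨j, hj⟩ := this
        calc ψ i x < ψ j x := hj
          _ ≤ M := Finset.le_sup' (fun i' => ψ i' x) (Finset.mem_univ j)
      have hsub : Tendsto (fun δ : ℝ => I.sup' hI (fun i' => ψ i' (x + δ • v)) - ψ i (x + δ • v))
          (nhds 0) (nhds (M - ψ i x)) := hsupcont.sub (hcont i)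
      have := hsub.eventually (eventually_gt_nhds (sub_pos.mpr hlt))
      exact this.mono (fun δ hδ => by linarith [hδ])
  have hev' : ∀ᶠ δ in nhdsWithin (0:ℝ) (Set.Ioi 0),
      (finMax hk (fun i => ψ i (x + δ • v)) - M) / δ = I.sup' hI (fun i => b i + δ * e i) := by
    filter_upwards [eventually_nhdsWithin_of_eventually_nhds hev, self_mem_nhdsWithin]
      with δ h1 (h2 : (0:ℝ) < δ)
    have hsup_eq : finMax hk (fun i => ψ i (x + δ • v)) = I.sup' hI (fun i => ψ i (x + δ • v)) := by
      apply le_antisymm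
      · exact Finset.sup'_le _ _ (fun i _ => h1 i)
      · exact Finset.sup'_le _ _
          (fun i _ => Finset.le_sup' (fun i' => ψ i' (x + δ • v)) (Finset.mem_univ i))
    rw [hsup_eq]
    have hcomp : ((I.sup' hI (fun i => ψ i (x + δ • v))) - M) / δ
        = I.sup' hI (fun i => (ψ i (x + δ • v) - M) / δ) := by
      have hg : ∀ (s t : ℝ), (s ⊔ t - M) / δ = ((s - M) / δ) ⊔ ((t - M) / δ) := by
        intro s t
        rw [← max_sub_sub_right, max_div_div_right h2.le]
      exact Finset.comp_sup'_eq_sup'_comp hI (fun t => (t - M)/δ) hg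
    rw [hcomp]
    apply Finset.sup'_congr hI rfl
    intro i hi
    rw [expand i δ, hMact i hi]
    field_simp
    ring
  have hfin : Tendsto (fun δ : ℝ => I.sup' hI (fun i => b i + δ * e i))
      (nhdsWithin 0 (Set.Ioi 0)) (nhds (I.sup' hI b)) := by
    apply tendstoSup'
    intro i _
    have hc : Continuous (fun δ : ℝ => b i + δ * e i) := by fun_prop
    have : Tendsto (fun δ : ℝ => b i + δ * e i) (nhds 0) (nhds (b i)) := by
      simpa using hc.tendsto 0
    exact this.mono_left nhdsWithin_le_nhds
  exact hfin.congr' (by filter_upwards [hev'] with δ h using h.symm)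

/-- Key inequality from d-stationarity: if the gradients of the active pieces of the first
max all have the same inner product `d` with `z - x`, then for every active piece `j` of the
second max, its gradient's inner product with `z - x` is at most `d`. -/
lemma dstat_ineq {n k₁ k₂ : ℕ} (hk₁ : 0 < k₁) (hk₂ : 0 < k₂)
    (X : Set (Fin n → ℝ))
    (Q₁ : Fin k₁ → Matrix (Fin n) (Fin n) ℝ) (q₁ : Fin k₁ → Fin n → ℝ) (α₁ : Fin k₁ → ℝ)
    (hQ₁ : ∀ i, (Q₁ i).IsSymm)
    (Q₂ : Fin k₂ → Matrix (Fin n) (Fin n) ℝ) (q₂ : Fin k₂ → Fin n → ℝ) (α₂ : Fin k₂ → ℝ)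
    (hQ₂ : ∀ j, (Q₂ j).IsSymm)
    (ψ₁ : Fin k₁ → (Fin n → ℝ) → ℝ)
    (hψ₁ : ∀ i x, ψ₁ i x = (1/2) * (x ⬝ᵥ (Q₁ i).mulVec x) + q₁ i ⬝ᵥ x + α₁ i)
    (ψ₂ : Fin k₂ → (Fin n → ℝ) → ℝ)
    (hψ₂ : ∀ j x, ψ₂ j x = (1/2) * (x ⬝ᵥ (Q₂ j).mulVec x) + q₂ j ⬝ᵥ x + α₂ j)
    (ψ : (Fin n → ℝ) → ℝ)
    (hψ : ∀ x, ψ x = finMax hk₁ (fun i => ψ₁ i x) - finMax hk₂ (fun j => ψ₂ j x))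
    (x : Fin n → ℝ) (hx : DStat ψ X x) (z : Fin n → ℝ) (hz : z ∈ X)
    (d : ℝ) (hd : ∀ i, (∀ j', ψ₁ j' x ≤ ψ₁ i x) → ((Q₁ i).mulVec x + q₁ i) ⬝ᵥ (z - x) = d)
    (j : Fin k₂) (hj : ∀ j', ψ₂ j' x ≤ ψ₂ j x) :
    ((Q₂ j).mulVec x + q₂ j) ⬝ᵥ (z - x) ≤ d := by
  classical
  obtain ⟨-, hstat⟩ := hx
  obtain ⟨L, hL, hL0⟩ := hstat z hz
  set I : Finset (Fin k₁) := Finset.univ.filter (fun i => ∀ j', ψ₁ j' x ≤ ψ₁ i x) with hIdef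
  have hImem : ∀ i, i ∈ I ↔ ∀ j', ψ₁ j' x ≤ ψ₁ i x := by
    intro i; simp [hIdef]
  have hIne : I.Nonempty := by
    obtain ⟨i₀, -, hmax⟩ := Finset.exists_max_image Finset.univ (fun i => ψ₁ i x)
      ⟨⟨0, hk₁⟩, Finset.mem_univ _⟩
    exact ⟨i₀, (hImem i₀).2 (fun j' => hmax j' (Finset.mem_univ j'))⟩
  set J : Finset (Fin k₂) := Finset.univ.filter (fun i => ∀ j', ψ₂ j' x ≤ ψ₂ i x) with hJdef
  have hJmem : ∀ i, i ∈ J ↔ ∀ j', ψ₂ j' x ≤ ψ₂ i x := by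
    intro i; simp [hJdef]
  have hJne : J.Nonempty := by
    obtain ⟨j₀, -, hmax⟩ := Finset.exists_max_image Finset.univ (fun i => ψ₂ i x)
      ⟨⟨0, hk₂⟩, Finset.mem_univ _⟩
    exact ⟨j₀, (hJmem j₀).2 (fun j' => hmax j' (Finset.mem_univ j'))⟩
  have h1 := hddMax hk₁ Q₁ q₁ α₁ hQ₁ ψ₁ hψ₁ x (z - x) I hIne hImem
  have h2 := hddMax hk₂ Q₂ q₂ α₂ hQ₂ ψ₂ hψ₂ x (z - x) J hJne hJmem
  have hdd : HasDirDeriv ψ x (z - x)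
      (I.sup' hIne (fun i => ((Q₁ i).mulVec x + q₁ i) ⬝ᵥ (z - x))
        - J.sup' hJne (fun j' => ((Q₂ j').mulVec x + q₂ j') ⬝ᵥ (z - x))) := by
    refine (h1.sub h2).congr (fun δ => ?_)
    rw [hψ, hψ]
    ring
  have hLeq : L = I.sup' hIne (fun i => ((Q₁ i).mulVec x + q₁ i) ⬝ᵥ (z - x))
      - J.sup' hJne (fun j' => ((Q₂ j').mulVec x + q₂ j') ⬝ᵥ (z - x)) :=
    tendsto_nhds_unique hL hdd
  have hsupI : I.sup' hIne (fun i => ((Q₁ i).mulVec x + q₁ i) ⬝ᵥ (z - x)) = d := by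
    rw [Finset.sup'_congr hIne rfl (fun i hi => hd i ((hImem i).1 hi))]
    exact Finset.sup'_const hIne d
  have hjJ : ((Q₂ j).mulVec x + q₂ j) ⬝ᵥ (z - x)
      ≤ J.sup' hJne (fun j' => ((Q₂ j').mulVec x + q₂ j') ⬝ᵥ (z - x)) :=
    Finset.le_sup' (fun j' => ((Q₂ j').mulVec x + q₂ j') ⬝ᵥ (z - x)) ((hJmem j).2 hj)
  rw [hLeq, hsupI] at hL0
  linarith
/-- Proposition 4: for `ψ = max_i ψ₁ᵢ - max_j ψ₂ⱼ` with all pieces quadratic and an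
arbitrary tuple `c` of vectors, `ψ` takes only finitely many values on `S_c ∩ D_{(ψ,X)}`,
where `S_c` is the set of `x ∈ X` such that `∇ψ₁ᵢ(x) + cⁱ` is a common vector for all
`i` in the argmax of the first max. -/
theorem stmt_5 {n k₁ k₂ : ℕ} (hk₁ : 0 < k₁) (hk₂ : 0 < k₂)
    (X : Set (Fin n → ℝ)) (hX : IsPolyhedral X)
    (Q₁ : Fin k₁ → Matrix (Fin n) (Fin n) ℝ) (q₁ : Fin k₁ → Fin n → ℝ) (α₁ : Fin k₁ → ℝ)
    (hQ₁ : ∀ i, (Q₁ i).IsSymm)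
    (Q₂ : Fin k₂ → Matrix (Fin n) (Fin n) ℝ) (q₂ : Fin k₂ → Fin n → ℝ) (α₂ : Fin k₂ → ℝ)
    (hQ₂ : ∀ j, (Q₂ j).IsSymm)
    (ψ₁ : Fin k₁ → (Fin n → ℝ) → ℝ)
    (hψ₁ : ∀ i x, ψ₁ i x = (1/2) * (x ⬝ᵥ (Q₁ i).mulVec x) + q₁ i ⬝ᵥ x + α₁ i)
    (ψ₂ : Fin k₂ → (Fin n → ℝ) → ℝ)
    (hψ₂ : ∀ j x, ψ₂ j x = (1/2) * (x ⬝ᵥ (Q₂ j).mulVec x) + q₂ j ⬝ᵥ x + α₂ j)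
    (ψ : (Fin n → ℝ) → ℝ)
    (hψ : ∀ x, ψ x = finMax hk₁ (fun i => ψ₁ i x) - finMax hk₂ (fun j => ψ₂ j x))
    (c : Fin k₁ → Fin n → ℝ) (Sc : Set (Fin n → ℝ))
    (hSc : Sc = {x ∈ X | ∃ w : Fin n → ℝ,
      ∀ i, (∀ j, ψ₁ j x ≤ ψ₁ i x) → (Q₁ i).mulVec x + q₁ i + c i = w}) :
    (ψ '' (Sc ∩ {x | DStat ψ X x})).Finite := by
  classical
  obtain ⟨m, A, b, hXdef⟩ := hX
  set T : Set (Fin n → ℝ) := Sc ∩ {x | DStat ψ X x} with hT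
  set pat : (Fin n → ℝ) → (Set (Fin k₁) × Set (Fin k₂) × Set (Fin m)) :=
    fun x => ({i | ∀ j, ψ₁ j x ≤ ψ₁ i x}, {j | ∀ j', ψ₂ j' x ≤ ψ₂ j x},
      {k | A k ⬝ᵥ x = b k}) with hpatdef
  have key : ∀ x ∈ T, ∀ y ∈ T, pat x = pat y → ψ x = ψ y := by
    intro x hxT y hyT hp
    obtain ⟨hxSc, hxD⟩ := hxT
    obtain ⟨hySc, hyD⟩ := hyT
    rw [hSc] at hxSc hySc
    obtain ⟨hxX, wx, hwx⟩ := hxSc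
    obtain ⟨hyX, wy, hwy⟩ := hySc
    -- pattern components
    have e1 : ∀ i, (∀ j, ψ₁ j x ≤ ψ₁ i x) ↔ (∀ j, ψ₁ j y ≤ ψ₁ i y) := by
      intro i
      have h := congrArg Prod.fst hp
      simp only [hpatdef] at h
      exact Set.ext_iff.mp h i
    have e2 : ∀ j, (∀ j', ψ₂ j' x ≤ ψ₂ j x) ↔ (∀ j', ψ₂ j' y ≤ ψ₂ j y) := by
      intro j
      have h := congrArg (fun p => p.2.1) hp
      simp only [hpatdef] at h
      exact Set.ext_iff.mp h j
    have e3 : ∀ k, (A k ⬝ᵥ x = b k) ↔ (A k ⬝ᵥ y = b k) := by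
      intro k
      have h := congrArg (fun p => p.2.2) hp
      simp only [hpatdef] at h
      exact Set.ext_iff.mp h k
    -- argmax witnesses
    obtain ⟨i₀, -, hi₀'⟩ := Finset.exists_max_image Finset.univ (fun i => ψ₁ i x)
      ⟨⟨0, hk₁⟩, Finset.mem_univ _⟩
    have hi₀ : ∀ j, ψ₁ j x ≤ ψ₁ i₀ x := fun j => hi₀' j (Finset.mem_univ j)
    obtain ⟨j₀, -, hj₀'⟩ := Finset.exists_max_image Finset.univ (fun j => ψ₂ j x)
      ⟨⟨0, hk₂⟩, Finset.mem_univ _⟩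
    have hj₀ : ∀ j', ψ₂ j' x ≤ ψ₂ j₀ x := fun j' => hj₀' j' (Finset.mem_univ j')
    -- gradients
    set g1 : Fin k₁ → (Fin n → ℝ) → (Fin n → ℝ) := fun i z => (Q₁ i).mulVec z + q₁ i with hg1
    set g2 : Fin k₂ → (Fin n → ℝ) → (Fin n → ℝ) := fun j z => (Q₂ j).mulVec z + q₂ j with hg2
    have diff1 : ∀ i, ψ₁ i y - ψ₁ i x
        = (1/2) * ((g1 i x ⬝ᵥ (y - x)) + (g1 i y ⬝ᵥ (y - x))) := by
      intro i
      rw [hψ₁, hψ₁]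
      exact quadDiff (Q₁ i) (hQ₁ i) (q₁ i) (α₁ i) x y
    have diff2 : ∀ j, ψ₂ j y - ψ₂ j x
        = (1/2) * ((g2 j x ⬝ᵥ (y - x)) + (g2 j y ⬝ᵥ (y - x))) := by
      intro j
      rw [hψ₂, hψ₂]
      exact quadDiff (Q₂ j) (hQ₂ j) (q₂ j) (α₂ j) x y
    -- gradients on the active set, in terms of w and c
    have hg1x : ∀ i, (∀ j, ψ₁ j x ≤ ψ₁ i x) → g1 i x = wx - c i := by
      intro i hi; rw [eq_sub_iff_add_eq]; exact hwx i hi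
    have hg1y : ∀ i, (∀ j, ψ₁ j x ≤ ψ₁ i x) → g1 i y = wy - c i := by
      intro i hi; rw [eq_sub_iff_add_eq]; exact hwy i ((e1 i).1 hi)
    -- constancy of c i ⬝ᵥ (y - x) over the active set
    have hcc : ∀ i, (∀ j, ψ₁ j x ≤ ψ₁ i x) → c i ⬝ᵥ (y - x) = c i₀ ⬝ᵥ (y - x) := by
      intro i hi
      have hxi : ψ₁ i x = ψ₁ i₀ x := le_antisymm (hi₀ i) (hi i₀)
      have hyi : ψ₁ i y = ψ₁ i₀ y := le_antisymm (((e1 i₀).1 hi₀) i) (((e1 i).1 hi) i₀)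
      have d1 := diff1 i
      have d2 := diff1 i₀
      rw [hxi, hyi] at d1
      rw [hg1x i hi, hg1y i hi, sub_dotProduct, sub_dotProduct] at d1
      rw [hg1x i₀ hi₀, hg1y i₀ hi₀, sub_dotProduct, sub_dotProduct] at d2
      linarith
    set d : ℝ := g1 i₀ x ⬝ᵥ (y - x) with hd
    set d' : ℝ := g1 i₀ y ⬝ᵥ (y - x) with hd'
    have hconstx : ∀ i, (∀ j, ψ₁ j x ≤ ψ₁ i x) → g1 i x ⬝ᵥ (y - x) = d := by
      intro i hi
      rw [hg1x i hi, sub_dotProduct, hcc i hi, hd, hg1x i₀ hi₀, sub_dotProduct]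
    have hconsty : ∀ i, (∀ j, ψ₁ j x ≤ ψ₁ i x) → g1 i y ⬝ᵥ (y - x) = d' := by
      intro i hi
      rw [hg1y i hi, sub_dotProduct, hcc i hi, hd', hg1y i₀ hi₀, sub_dotProduct]
    -- membership facts
    have hxXA : ∀ k, A k ⬝ᵥ x ≤ b k := by rw [hXdef] at hxX; exact hxX
    have hyXA : ∀ k, A k ⬝ᵥ y ≤ b k := by rw [hXdef] at hyX; exact hyX
    have hAu : ∀ k, A k ⬝ᵥ x = b k → A k ⬝ᵥ (y - x) = 0 := by
      intro k hk
      rw [dotProduct_sub, (e3 k).1 hk, hk, sub_self]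
    -- feasibility of small moves along ±(y - x)
    have hfeas : ∃ ε : ℝ, 0 < ε ∧ x - ε • (y - x) ∈ X ∧ y + ε • (y - x) ∈ X := by
      have hev : ∀ᶠ ε in nhds (0:ℝ), ∀ k,
          A k ⬝ᵥ (x - ε • (y - x)) ≤ b k ∧ A k ⬝ᵥ (y + ε • (y - x)) ≤ b k := by
        rw [eventually_all]
        intro k
        by_cases hk : A k ⬝ᵥ x = b k
        · apply Filter.Eventually.of_forall
          intro ε
          have h0 : A k ⬝ᵥ (y - x) = 0 := hAu k hk
          constructor
          · rw [dotProduct_sub, dotProduct_smul, h0, smul_eq_mul, mul_zero, sub_zero]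
            exact hxXA k
          · rw [dotProduct_add, dotProduct_smul, h0, smul_eq_mul, mul_zero, add_zero]
            exact hyXA k
        · have hlt : A k ⬝ᵥ x < b k := lt_of_le_of_ne (hxXA k) hk
          have hky : A k ⬝ᵥ y ≠ b k := fun h => hk ((e3 k).2 h)
          have hlty : A k ⬝ᵥ y < b k := lt_of_le_of_ne (hyXA k) hky
          have c1 : Tendsto (fun ε : ℝ => A k ⬝ᵥ (x - ε • (y - x))) (nhds 0)
              (nhds (A k ⬝ᵥ x)) := by
            have heq : (fun ε : ℝ => A k ⬝ᵥ (x - ε • (y - x)))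
                = fun ε : ℝ => A k ⬝ᵥ x - ε * (A k ⬝ᵥ (y - x)) := by
              funext ε
              rw [dotProduct_sub, dotProduct_smul, smul_eq_mul]
            rw [heq]
            have hc : Continuous (fun ε : ℝ => A k ⬝ᵥ x - ε * (A k ⬝ᵥ (y - x))) := by fun_prop
            simpa using hc.tendsto 0
          have c2 : Tendsto (fun ε : ℝ => A k ⬝ᵥ (y + ε • (y - x))) (nhds 0)
              (nhds (A k ⬝ᵥ y)) := by
            have heq : (fun ε : ℝ => A k ⬝ᵥ (y + ε • (y - x)))
                = fun ε : ℝ => A k ⬝ᵥ y + ε * (A k ⬝ᵥ (y - x)) := by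
              funext ε
              rw [dotProduct_add, dotProduct_smul, smul_eq_mul]
            rw [heq]
            have hc : Continuous (fun ε : ℝ => A k ⬝ᵥ y + ε * (A k ⬝ᵥ (y - x))) := by fun_prop
            simpa using hc.tendsto 0
          have e1' := c1.eventually (eventually_lt_nhds hlt)
          have e2' := c2.eventually (eventually_lt_nhds hlty)
          filter_upwards [e1', e2'] with ε h1 h2
          exact ⟨h1.le, h2.le⟩
      have := (eventually_nhdsWithin_of_eventually_nhds hev).and
        (self_mem_nhdsWithin (s := Set.Ioi (0:ℝ)) (a := (0:ℝ)))
      obtain ⟨ε, h1, h2⟩ := this.exists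
      refine ⟨ε, h2, ?_, ?_⟩
      · rw [hXdef]; exact fun k => (h1 k).1
      · rw [hXdef]; exact fun k => (h1 k).2
    obtain ⟨ε, hε, hzx, hzy⟩ := hfeas
    -- four applications of dstat_ineq
    have T1 : g2 j₀ x ⬝ᵥ (y - x) ≤ d :=
      dstat_ineq hk₁ hk₂ X Q₁ q₁ α₁ hQ₁ Q₂ q₂ α₂ hQ₂ ψ₁ hψ₁ ψ₂ hψ₂ ψ hψ x hxD y
        (by rw [hXdef] at hyX ⊢; exact hyX) d hconstx j₀ hj₀
    have T2 : d ≤ g2 j₀ x ⬝ᵥ (y - x) := by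
      have harg : ((x - ε • (y - x)) - x) = -(ε • (y - x)) := by abel
      have hdd2 : ∀ i, (∀ j, ψ₁ j x ≤ ψ₁ i x) →
          g1 i x ⬝ᵥ ((x - ε • (y - x)) - x) = -(ε * d) := by
        intro i hi
        rw [harg, dotProduct_neg, dotProduct_smul, smul_eq_mul, hconstx i hi]
      have := dstat_ineq hk₁ hk₂ X Q₁ q₁ α₁ hQ₁ Q₂ q₂ α₂ hQ₂ ψ₁ hψ₁ ψ₂ hψ₂ ψ hψ x hxD
        (x - ε • (y - x)) hzx (-(ε * d)) hdd2 j₀ hj₀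
      rw [harg, dotProduct_neg, dotProduct_smul, smul_eq_mul, neg_le_neg_iff] at this
      exact le_of_mul_le_mul_left this hε
    have hj₀y : ∀ j', ψ₂ j' y ≤ ψ₂ j₀ y := (e2 j₀).1 hj₀
    have hconstx' : ∀ i, (∀ j, ψ₁ j y ≤ ψ₁ i y) → g1 i y ⬝ᵥ (x - y) = -d' := by
      intro i hi
      have : (x - y) = -(y - x) := by abel
      rw [this, dotProduct_neg, hconsty i ((e1 i).2 hi)]
    have T3 : d' ≤ g2 j₀ y ⬝ᵥ (y - x) := by
      have := dstat_ineq hk₁ hk₂ X Q₁ q₁ α₁ hQ₁ Q₂ q₂ α₂ hQ₂ ψ₁ hψ₁ ψ₂ hψ₂ ψ hψ y hyD x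
        (by rw [hXdef] at hxX ⊢; exact hxX) (-d') hconstx' j₀ hj₀y
      have hxy : (x - y) = -(y - x) := by abel
      rw [hxy, dotProduct_neg, neg_le_neg_iff] at this
      exact this
    have T4 : g2 j₀ y ⬝ᵥ (y - x) ≤ d' := by
      have harg : ((y + ε • (y - x)) - y) = ε • (y - x) := by abel
      have hdd4 : ∀ i, (∀ j, ψ₁ j y ≤ ψ₁ i y) →
          g1 i y ⬝ᵥ ((y + ε • (y - x)) - y) = ε * d' := by
        intro i hi
        rw [harg, dotProduct_smul, smul_eq_mul, hconsty i ((e1 i).2 hi)]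
      have := dstat_ineq hk₁ hk₂ X Q₁ q₁ α₁ hQ₁ Q₂ q₂ α₂ hQ₂ ψ₁ hψ₁ ψ₂ hψ₂ ψ hψ y hyD
        (y + ε • (y - x)) hzy (ε * d') hdd4 j₀ hj₀y
      rw [harg, dotProduct_smul, smul_eq_mul] at this
      exact le_of_mul_le_mul_left this hε
    -- conclude
    have hψx : ψ x = ψ₁ i₀ x - ψ₂ j₀ x := by
      rw [hψ x, finMax_eq_of_argmax hk₁ _ i₀ hi₀, finMax_eq_of_argmax hk₂ _ j₀ hj₀]
    have hψy : ψ y = ψ₁ i₀ y - ψ₂ j₀ y := by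
      rw [hψ y, finMax_eq_of_argmax hk₁ _ i₀ ((e1 i₀).1 hi₀),
        finMax_eq_of_argmax hk₂ _ j₀ hj₀y]
    have hjx : g2 j₀ x ⬝ᵥ (y - x) = d := le_antisymm T1 T2
    have hjy : g2 j₀ y ⬝ᵥ (y - x) = d' := le_antisymm T4 T3
    have hD1 := diff1 i₀
    have hD2 := diff2 j₀
    rw [hconstx i₀ hi₀, hconsty i₀ hi₀] at hD1
    rw [hjx, hjy] at hD2
    rw [hψx, hψy]
    linarith
  -- finiteness via the finitely many patterns
  set g : (Set (Fin k₁) × Set (Fin k₂) × Set (Fin m)) → ℝ :=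
    fun p => if h : ∃ x, x ∈ T ∧ pat x = p then ψ h.choose else 0 with hgdef
  apply Set.Finite.subset (Set.finite_range g)
  rintro _ ⟨x, hxT, rfl⟩
  have hex : ∃ x', x' ∈ T ∧ pat x' = pat x := ⟨x, hxT, rfl⟩
  refine ⟨pat x, ?_⟩
  simp only [hgdef, dif_pos hex]
  exact key _ hex.choose_spec.1 _ hxT hex.choose_spec.2
end

section
/- Let X ⊆ ℝⁿ be a polyhedral set and ψ(x) = max_{1≤i≤k₁} ψ₁ᵢ(x) − max_{1≤j≤k₂} ψ₂ⱼ(x), where every ψ₁ᵢ is an affine function and every ψ₂ⱼ is an (indefinite) quadratic function. Then the set ψ(D_{(ψ,X)}) of d-stationary values of ψ on X is finite. -/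
open Matrix Filter Topology

open Finset


private lemma ev_sel {k : ℕ} (hne : (univ : Finset (Fin k)).Nonempty)
    (g : Fin k → ℝ → ℝ)
    (hg : ∀ j, Tendsto (g j) (𝓝[>] (0:ℝ)) (𝓝 (g j 0)))
    (S : Finset (Fin k)) (hSne : S.Nonempty)
    (hS : ∀ j, j ∈ S ↔ g j 0 = univ.sup' hne (fun j => g j 0)) :
    ∀ᶠ δ in 𝓝[>] (0:ℝ),
      univ.sup' hne (fun j => g j δ) = S.sup' hSne (fun j => g j δ) := by
  set M := univ.sup' hne (fun j => g j 0) with hM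
  rcases eq_or_ne S univ with rfl | hSu
  · filter_upwards with δ; rfl
  · have hTne : (univ \ S).Nonempty := by
      rw [Finset.sdiff_nonempty]
      intro hsub
      exact hSu (Finset.eq_univ_of_forall fun j => hsub (mem_univ j))
    set M' := (univ \ S).sup' hTne (fun j => g j 0) with hM'
    have hMM : M' < M := by
      rw [hM', Finset.sup'_lt_iff]
      intro j hj
      have hjle : g j 0 ≤ M := Finset.le_sup' (fun j => g j 0) (mem_univ j)
      have hjne : g j 0 ≠ M := by
        intro h; exact (Finset.mem_sdiff.mp hj).2 ((hS j).mpr h)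
      exact lt_of_le_of_ne hjle hjne
    set ε := (M - M') / 2 with hε
    have hεpos : 0 < ε := by rw [hε]; linarith
    have hall : ∀ᶠ δ in 𝓝[>] (0:ℝ), ∀ j, dist (g j δ) (g j 0) < ε :=
      eventually_all.mpr fun j => Metric.tendsto_nhds.mp (hg j) ε hεpos
    obtain ⟨j₀, hj₀⟩ := hSne
    filter_upwards [hall] with δ hδ
    apply le_antisymm
    · apply Finset.sup'_le
      intro j _
      by_cases hjS : j ∈ S
      · exact Finset.le_sup' (fun j => g j δ) hjS
      · have hjT : j ∈ univ \ S := Finset.mem_sdiff.mpr ⟨mem_univ j, hjS⟩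
        have h1 : |g j δ - g j 0| < ε := by rw [← Real.dist_eq]; exact hδ j
        have h2 : |g j₀ δ - g j₀ 0| < ε := by rw [← Real.dist_eq]; exact hδ j₀
        have h3 : g j 0 ≤ M' := Finset.le_sup' (fun j => g j 0) hjT
        have h4 : g j₀ 0 = M := (hS j₀).mp hj₀
        have h5 : g j δ ≤ g j₀ δ := by
          rw [abs_sub_lt_iff] at h1 h2
          rw [hε] at *; linarith
        exact h5.trans (Finset.le_sup' (fun j => g j δ) hj₀)
    · exact Finset.sup'_le _ _ fun j hj => Finset.le_sup' (fun j => g j δ) (mem_univ j)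

private lemma tendsto_quot_max {k : ℕ} (hne : (univ : Finset (Fin k)).Nonempty)
    (g h : Fin k → ℝ → ℝ)
    (hgh : ∀ j δ, g j δ = g j 0 + δ * h j δ)
    (hh : ∀ j, Tendsto (h j) (𝓝[>] (0:ℝ)) (𝓝 (h j 0)))
    (S : Finset (Fin k)) (hSne : S.Nonempty)
    (hS : ∀ j, j ∈ S ↔ g j 0 = univ.sup' hne (fun j => g j 0)) :
    Tendsto (fun δ => (univ.sup' hne (fun j => g j δ) - univ.sup' hne (fun j => g j 0)) / δ)
      (𝓝[>] (0:ℝ)) (𝓝 (S.sup' hSne (fun j => h j 0))) := by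
  set M := univ.sup' hne (fun j => g j 0) with hM
  have hg : ∀ j, Tendsto (g j) (𝓝[>] (0:ℝ)) (𝓝 (g j 0)) := by
    intro j
    have hid : Tendsto (fun δ : ℝ => δ) (𝓝[>] (0:ℝ)) (𝓝 0) :=
      tendsto_id.mono_left nhdsWithin_le_nhds
    have := (tendsto_const_nhds (x := g j 0)).add (hid.mul (hh j))
    simp only [zero_mul, add_zero] at this
    exact this.congr fun δ => (hgh j δ).symm
  have hsel := ev_sel hne g hg S hSne hS
  have hlim : Tendsto (fun δ => S.sup' hSne (fun j => h j δ)) (𝓝[>] (0:ℝ))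
      (𝓝 (S.sup' hSne (fun j => h j 0))) :=
    Tendsto.finset_sup'_nhds_apply hSne fun j _ => hh j
  apply hlim.congr'
  filter_upwards [hsel, self_mem_nhdsWithin] with δ hδsel (hδ : (0:ℝ) < δ)
  have hsup : univ.sup' hne (fun j => g j δ) = M + δ * S.sup' hSne (fun j => h j δ) := by
    rw [hδsel]
    have h1 : S.sup' hSne (fun j => g j δ) = S.sup' hSne (fun j => M + δ * h j δ) := by
      apply Finset.sup'_congr hSne rfl
      intro j hj
      rw [hgh j δ, (hS j).mp hj]
    rw [h1]
    exact (Finset.comp_sup'_eq_sup'_comp hSne (f := fun j => h j δ)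
      (fun t => M + δ * t) (fun t u => by
        rw [mul_max_of_nonneg _ _ hδ.le, max_add_add_left])).symm
  rw [hsup]
  field_simp
  ring

open Finset
open scoped Classical in
private noncomputable def Iset {n k₁ : ℕ} (hk₁ : 0 < k₁) (a : Fin k₁ → Fin n → ℝ)
    (α : Fin k₁ → ℝ) (x : Fin n → ℝ) : Finset (Fin k₁) :=
  univ.filter fun i => a i ⬝ᵥ x + α i = finMax hk₁ (fun i' => a i' ⬝ᵥ x + α i')

open scoped Classical in
private noncomputable def Jset {n k₂ : ℕ} (hk₂ : 0 < k₂) (ψ₂ : Fin k₂ → (Fin n → ℝ) → ℝ)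
    (x : Fin n → ℝ) : Finset (Fin k₂) :=
  univ.filter fun j => ψ₂ j x = finMax hk₂ (fun j' => ψ₂ j' x)

open scoped Classical in
private noncomputable def Kset {n m : ℕ} (A : Fin m → Fin n → ℝ) (b : Fin m → ℝ)
    (x : Fin n → ℝ) : Finset (Fin m) :=
  univ.filter fun i => A i ⬝ᵥ x = b i

private lemma INe {n k₁ : ℕ} (hk₁ : 0 < k₁) (a : Fin k₁ → Fin n → ℝ) (α : Fin k₁ → ℝ)
    (x : Fin n → ℝ) : (Iset hk₁ a α x).Nonempty := by
  classical
  obtain ⟨i, _, hi⟩ := Finset.exists_mem_eq_sup'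
    (Finset.univ_nonempty_iff.mpr ⟨⟨0, hk₁⟩⟩) (fun i => a i ⬝ᵥ x + α i)
  exact ⟨i, Finset.mem_filter.mpr ⟨mem_univ i, hi.symm⟩⟩

private lemma JNe {n k₂ : ℕ} (hk₂ : 0 < k₂) (ψ₂ : Fin k₂ → (Fin n → ℝ) → ℝ)
    (x : Fin n → ℝ) : (Jset hk₂ ψ₂ x).Nonempty := by
  classical
  obtain ⟨j, _, hj⟩ := Finset.exists_mem_eq_sup'
    (Finset.univ_nonempty_iff.mpr ⟨⟨0, hk₂⟩⟩) (fun j => ψ₂ j x)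
  exact ⟨j, Finset.mem_filter.mpr ⟨mem_univ j, hj.symm⟩⟩

section Main

variable {n k₁ k₂ m : ℕ} (hk₁ : 0 < k₁) (hk₂ : 0 < k₂)
  (a : Fin k₁ → Fin n → ℝ) (α : Fin k₁ → ℝ)
  (Q₂ : Fin k₂ → Matrix (Fin n) (Fin n) ℝ) (q₂ : Fin k₂ → Fin n → ℝ) (α₂ : Fin k₂ → ℝ)
  (ψ₂ : Fin k₂ → (Fin n → ℝ) → ℝ)

private lemma expandQ (hQ₂ : ∀ j, (Q₂ j).IsSymm)
    (hψ₂ : ∀ j x, ψ₂ j x = (1/2) * (x ⬝ᵥ (Q₂ j).mulVec x) + q₂ j ⬝ᵥ x + α₂ j)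
    (j : Fin k₂) (y w : Fin n → ℝ) :
    ψ₂ j (y + w) = ψ₂ j y + (Q₂ j *ᵥ y + q₂ j) ⬝ᵥ w + (1/2) * ((Q₂ j *ᵥ w) ⬝ᵥ w) := by
  have hsym : ∀ (u z : Fin n → ℝ), u ⬝ᵥ Q₂ j *ᵥ z = (Q₂ j *ᵥ u) ⬝ᵥ z := fun u z => by
    rw [dotProduct_mulVec, ← Matrix.vecMul_transpose, (hQ₂ j).eq]
  simp only [hψ₂, Matrix.mulVec_add, dotProduct_add, add_dotProduct]
  rw [hsym y w, dotProduct_comm w (Q₂ j *ᵥ y), hsym w w]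
  ring

private lemma hasDD (hQ₂ : ∀ j, (Q₂ j).IsSymm)
    (hψ₂ : ∀ j x, ψ₂ j x = (1/2) * (x ⬝ᵥ (Q₂ j).mulVec x) + q₂ j ⬝ᵥ x + α₂ j)
    (ψ : (Fin n → ℝ) → ℝ)
    (hψ : ∀ x, ψ x = finMax hk₁ (fun i => a i ⬝ᵥ x + α i) - finMax hk₂ (fun j => ψ₂ j x))
    (x v : Fin n → ℝ) :
    HasDirDeriv ψ x v
      ((Iset hk₁ a α x).sup' (INe hk₁ a α x) (fun i => a i ⬝ᵥ v)
        - (Jset hk₂ ψ₂ x).sup' (JNe hk₂ ψ₂ x) (fun j => (Q₂ j *ᵥ x + q₂ j) ⬝ᵥ v)) := by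
  classical
  have uNe₁ : (univ : Finset (Fin k₁)).Nonempty := Finset.univ_nonempty_iff.mpr ⟨⟨0, hk₁⟩⟩
  have uNe₂ : (univ : Finset (Fin k₂)).Nonempty := Finset.univ_nonempty_iff.mpr ⟨⟨0, hk₂⟩⟩
  have hid : Tendsto (fun δ : ℝ => δ) (𝓝[>] (0:ℝ)) (𝓝 0) :=
    tendsto_id.mono_left nhdsWithin_le_nhds
  have q1 := tendsto_quot_max uNe₁ (fun i δ => a i ⬝ᵥ (x + δ • v) + α i)
    (fun i _ => a i ⬝ᵥ v)
    (fun i δ => by simp [dotProduct_add, dotProduct_smul, smul_eq_mul, zero_smul]; ring)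
    (fun i => tendsto_const_nhds)
    (Iset hk₁ a α x) (INe hk₁ a α x)
    (fun i => by unfold Iset; rw [Finset.mem_filter]; simp [finMax, zero_smul])
  have hexp : ∀ (j : Fin k₂) (δ : ℝ), ψ₂ j (x + δ • v)
      = ψ₂ j (x + (0:ℝ) • v)
        + δ * ((Q₂ j *ᵥ x + q₂ j) ⬝ᵥ v + δ * ((1/2) * ((Q₂ j *ᵥ v) ⬝ᵥ v))) := by
    intro j δ
    rw [expandQ Q₂ q₂ α₂ ψ₂ hQ₂ hψ₂ j x (δ • v)]
    simp only [zero_smul, add_zero, Matrix.mulVec_smul, dotProduct_smul, smul_dotProduct,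
      smul_eq_mul]
    ring
  have q2 := tendsto_quot_max uNe₂ (fun j δ => ψ₂ j (x + δ • v))
    (fun j δ => (Q₂ j *ᵥ x + q₂ j) ⬝ᵥ v + δ * ((1/2) * ((Q₂ j *ᵥ v) ⬝ᵥ v)))
    hexp
    (fun j => by
      have := (tendsto_const_nhds (x := (Q₂ j *ᵥ x + q₂ j) ⬝ᵥ v)).add
        (hid.mul (tendsto_const_nhds (x := (1/2) * ((Q₂ j *ᵥ v) ⬝ᵥ v))))
      simpa using this)
    (Jset hk₂ ψ₂ x) (JNe hk₂ ψ₂ x)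
    (fun j => by unfold Jset; rw [Finset.mem_filter]; simp [finMax, zero_smul])
  have hval : (Jset hk₂ ψ₂ x).sup' (JNe hk₂ ψ₂ x)
      (fun j => (Q₂ j *ᵥ x + q₂ j) ⬝ᵥ v + (0:ℝ) * ((1/2) * ((Q₂ j *ᵥ v) ⬝ᵥ v)))
      = (Jset hk₂ ψ₂ x).sup' (JNe hk₂ ψ₂ x) (fun j => (Q₂ j *ᵥ x + q₂ j) ⬝ᵥ v) :=
    Finset.sup'_congr _ rfl (fun j _ => by ring)
  have hcomb := q1.sub q2
  rw [hval] at hcomb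
  refine hcomb.congr fun δ => ?_
  rw [hψ (x + δ • v), hψ x]
  simp only [finMax, zero_smul, add_zero]
  ring

private lemma stat_le (hQ₂ : ∀ j, (Q₂ j).IsSymm)
    (hψ₂ : ∀ j x, ψ₂ j x = (1/2) * (x ⬝ᵥ (Q₂ j).mulVec x) + q₂ j ⬝ᵥ x + α₂ j)
    (ψ : (Fin n → ℝ) → ℝ)
    (hψ : ∀ x, ψ x = finMax hk₁ (fun i => a i ⬝ᵥ x + α i) - finMax hk₂ (fun j => ψ₂ j x))
    (X : Set (Fin n → ℝ)) (x : Fin n → ℝ) (hx : DStat ψ X x)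
    (z : Fin n → ℝ) (hz : z ∈ X) (j : Fin k₂) (hj : j ∈ Jset hk₂ ψ₂ x) :
    (Q₂ j *ᵥ x + q₂ j) ⬝ᵥ (z - x)
      ≤ (Iset hk₁ a α x).sup' (INe hk₁ a α x) (fun i => a i ⬝ᵥ (z - x)) := by
  obtain ⟨L, hL, hL0⟩ := hx.2 z hz
  have hdd := hasDD hk₁ hk₂ a α Q₂ q₂ α₂ ψ₂ hQ₂ hψ₂ ψ hψ x (z - x)
  have hLe := tendsto_nhds_unique hL hdd
  have h1 : (Q₂ j *ᵥ x + q₂ j) ⬝ᵥ (z - x)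
      ≤ (Jset hk₂ ψ₂ x).sup' (JNe hk₂ ψ₂ x) (fun j' => (Q₂ j' *ᵥ x + q₂ j') ⬝ᵥ (z - x)) :=
    Finset.le_sup' (fun j' => (Q₂ j' *ᵥ x + q₂ j') ⬝ᵥ (z - x)) hj
  rw [hLe] at hL0
  linarith

end Main

section Main2

variable {n k₁ k₂ m : ℕ} (hk₁ : 0 < k₁) (hk₂ : 0 < k₂)
  (a : Fin k₁ → Fin n → ℝ) (α : Fin k₁ → ℝ)
  (Q₂ : Fin k₂ → Matrix (Fin n) (Fin n) ℝ) (q₂ : Fin k₂ → Fin n → ℝ) (α₂ : Fin k₂ → ℝ)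
  (ψ₂ : Fin k₂ → (Fin n → ℝ) → ℝ)
  (A : Fin m → Fin n → ℝ) (b : Fin m → ℝ)

private lemma grad_eq (hQ₂ : ∀ j, (Q₂ j).IsSymm)
    (hψ₂ : ∀ j x, ψ₂ j x = (1/2) * (x ⬝ᵥ (Q₂ j).mulVec x) + q₂ j ⬝ᵥ x + α₂ j)
    (ψ : (Fin n → ℝ) → ℝ)
    (hψ : ∀ x, ψ x = finMax hk₁ (fun i => a i ⬝ᵥ x + α i) - finMax hk₂ (fun j => ψ₂ j x))
    (x y : Fin n → ℝ)
    (hx : DStat ψ {x' | ∀ i, A i ⬝ᵥ x' ≤ b i} x)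
    (hy : DStat ψ {x' | ∀ i, A i ⬝ᵥ x' ≤ b i} y)
    (hI : Iset hk₁ a α x = Iset hk₁ a α y) (hK : Kset A b x = Kset A b y)
    (j : Fin k₂) (hj : j ∈ Jset hk₂ ψ₂ x) :
    (Q₂ j *ᵥ x + q₂ j) ⬝ᵥ (y - x)
      = finMax hk₁ (fun i => a i ⬝ᵥ y + α i) - finMax hk₁ (fun i => a i ⬝ᵥ x + α i) := by
  classical
  set c : ℝ := finMax hk₁ (fun i => a i ⬝ᵥ y + α i) - finMax hk₁ (fun i => a i ⬝ᵥ x + α i)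
    with hc
  have hIconst : ∀ i ∈ Iset hk₁ a α x, a i ⬝ᵥ (y - x) = c := by
    intro i hi
    have h1 : a i ⬝ᵥ x + α i = finMax hk₁ (fun i' => a i' ⬝ᵥ x + α i') :=
      (Finset.mem_filter.mp hi).2
    have hi' : i ∈ Iset hk₁ a α y := by rw [← hI]; exact hi
    have h2 : a i ⬝ᵥ y + α i = finMax hk₁ (fun i' => a i' ⬝ᵥ y + α i') :=
      (Finset.mem_filter.mp hi').2
    rw [dotProduct_sub, hc]
    linarith
  have hDIy : (Iset hk₁ a α x).sup' (INe hk₁ a α x) (fun i => a i ⬝ᵥ (y - x)) = c := by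
    rw [Finset.sup'_congr (INe hk₁ a α x) rfl hIconst, Finset.sup'_const]
  have hub : (Q₂ j *ᵥ x + q₂ j) ⬝ᵥ (y - x) ≤ c := by
    have := stat_le hk₁ hk₂ a α Q₂ q₂ α₂ ψ₂ hQ₂ hψ₂ ψ hψ _ x hx y hy.1 j hj
    rwa [hDIy] at this
  have hxy0 : ∀ i ∈ Kset A b x, A i ⬝ᵥ (x - y) = 0 := by
    intro i hi
    have h1 : A i ⬝ᵥ x = b i := (Finset.mem_filter.mp hi).2
    have hi' : i ∈ Kset A b y := by rw [← hK]; exact hi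
    have h2 : A i ⬝ᵥ y = b i := (Finset.mem_filter.mp hi').2
    rw [dotProduct_sub, h1, h2, sub_self]
  have hev : ∀ᶠ ε in 𝓝[>] (0:ℝ), ∀ i, A i ⬝ᵥ (x + ε • (x - y)) ≤ b i := by
    rw [Filter.eventually_all]
    intro i
    by_cases hiK : i ∈ Kset A b x
    · refine Filter.Eventually.of_forall fun ε => ?_
      have h0 := hxy0 i hiK
      have h1 : A i ⬝ᵥ x = b i := (Finset.mem_filter.mp hiK).2
      simp [dotProduct_add, dotProduct_smul, smul_eq_mul, h0, h1]
    · have hlt : A i ⬝ᵥ x < b i :=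
        lt_of_le_of_ne (hx.1 i) (by simpa [Kset, Finset.mem_filter] using hiK)
      have htend : Tendsto (fun ε : ℝ => A i ⬝ᵥ (x + ε • (x - y))) (𝓝[>] (0:ℝ))
          (𝓝 (A i ⬝ᵥ x)) := by
        have hid : Tendsto (fun ε : ℝ => ε) (𝓝[>] (0:ℝ)) (𝓝 0) :=
          tendsto_id.mono_left nhdsWithin_le_nhds
        have := (tendsto_const_nhds (x := A i ⬝ᵥ x)).add
          (hid.mul (tendsto_const_nhds (x := A i ⬝ᵥ (x - y))))
        simp only [zero_mul, add_zero] at this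
        refine this.congr fun ε => ?_
        simp [dotProduct_add, dotProduct_smul, smul_eq_mul]
      exact (htend.eventually_lt_const hlt).mono fun ε h => h.le
  obtain ⟨ε, hεall, hεmem⟩ := (hev.and self_mem_nhdsWithin).exists
  have hεpos : (0:ℝ) < ε := hεmem
  have hz : x + ε • (x - y) ∈ {x' | ∀ i, A i ⬝ᵥ x' ≤ b i} := hεall
  have hlb : c ≤ (Q₂ j *ᵥ x + q₂ j) ⬝ᵥ (y - x) := by
    have hs := stat_le hk₁ hk₂ a α Q₂ q₂ α₂ ψ₂ hQ₂ hψ₂ ψ hψ _ x hx (x + ε • (x - y)) hz j hj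
    have hzx : x + ε • (x - y) - x = ε • (x - y) := add_sub_cancel_left x _
    rw [hzx] at hs
    have hIconst' : ∀ i ∈ Iset hk₁ a α x, a i ⬝ᵥ (ε • (x - y)) = -(ε * c) := by
      intro i hi
      have h := hIconst i hi
      rw [dotProduct_sub] at h
      rw [dotProduct_smul, smul_eq_mul, dotProduct_sub]
      nlinarith [h]
    have hsup : (Iset hk₁ a α x).sup' (INe hk₁ a α x) (fun i => a i ⬝ᵥ (ε • (x - y)))
        = -(ε * c) := by
      rw [Finset.sup'_congr (INe hk₁ a α x) rfl hIconst', Finset.sup'_const]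
    rw [hsup] at hs
    have h3 : (Q₂ j *ᵥ x + q₂ j) ⬝ᵥ (ε • (x - y))
        = -(ε * ((Q₂ j *ᵥ x + q₂ j) ⬝ᵥ (y - x))) := by
      rw [dotProduct_smul, smul_eq_mul, dotProduct_sub, dotProduct_sub]; ring
    rw [h3] at hs
    have h4 : ε * c ≤ ε * ((Q₂ j *ᵥ x + q₂ j) ⬝ᵥ (y - x)) := by linarith
    exact (mul_le_mul_iff_right₀ hεpos).mp h4
  exact le_antisymm hub hlb

private lemma keyConst (hQ₂ : ∀ j, (Q₂ j).IsSymm)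
    (hψ₂ : ∀ j x, ψ₂ j x = (1/2) * (x ⬝ᵥ (Q₂ j).mulVec x) + q₂ j ⬝ᵥ x + α₂ j)
    (ψ : (Fin n → ℝ) → ℝ)
    (hψ : ∀ x, ψ x = finMax hk₁ (fun i => a i ⬝ᵥ x + α i) - finMax hk₂ (fun j => ψ₂ j x))
    (x y : Fin n → ℝ)
    (hx : DStat ψ {x' | ∀ i, A i ⬝ᵥ x' ≤ b i} x)
    (hy : DStat ψ {x' | ∀ i, A i ⬝ᵥ x' ≤ b i} y)
    (hI : Iset hk₁ a α x = Iset hk₁ a α y) (hJ : Jset hk₂ ψ₂ x = Jset hk₂ ψ₂ y)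
    (hK : Kset A b x = Kset A b y) :
    ψ x = ψ y := by
  classical
  obtain ⟨j, hj⟩ := JNe hk₂ ψ₂ x
  have h1 := grad_eq hk₁ hk₂ a α Q₂ q₂ α₂ ψ₂ A b hQ₂ hψ₂ ψ hψ x y hx hy hI hK j hj
  have hj' : j ∈ Jset hk₂ ψ₂ y := by rw [← hJ]; exact hj
  have h2 := grad_eq hk₁ hk₂ a α Q₂ q₂ α₂ ψ₂ A b hQ₂ hψ₂ ψ hψ y x hy hx hI.symm hK.symm j hj'
  have hquad : (Q₂ j *ᵥ (y - x)) ⬝ᵥ (y - x) = 0 := by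
    have e1 := h1; have e2 := h2
    simp only [Matrix.mulVec_sub, sub_dotProduct, add_dotProduct, dotProduct_sub] at e1 e2 ⊢
    linarith
  have hxyy : x + (y - x) = y := by abel
  have hexp := expandQ Q₂ q₂ α₂ ψ₂ hQ₂ hψ₂ j x (y - x)
  rw [hxyy, hquad] at hexp
  have hjx : ψ₂ j x = finMax hk₂ (fun j' => ψ₂ j' x) := (Finset.mem_filter.mp hj).2
  have hjy : ψ₂ j y = finMax hk₂ (fun j' => ψ₂ j' y) := (Finset.mem_filter.mp hj').2
  rw [hψ x, hψ y, ← hjx, ← hjy]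
  linarith

end Main2

/-- Corollary 5(a): for `ψ = max_i ψ₁ᵢ - max_j ψ₂ⱼ` with each `ψ₁ᵢ` affine and each
`ψ₂ⱼ` (indefinite) quadratic, the set of d-stationary values of `ψ` on a polyhedral
set `X` is finite. -/
theorem stmt_6 {n k₁ k₂ : ℕ} (hk₁ : 0 < k₁) (hk₂ : 0 < k₂)
    (X : Set (Fin n → ℝ)) (hX : IsPolyhedral X)
    (a : Fin k₁ → Fin n → ℝ) (α : Fin k₁ → ℝ)
    (Q₂ : Fin k₂ → Matrix (Fin n) (Fin n) ℝ) (q₂ : Fin k₂ → Fin n → ℝ) (α₂ : Fin k₂ → ℝ)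
    (hQ₂ : ∀ j, (Q₂ j).IsSymm)
    (ψ₂ : Fin k₂ → (Fin n → ℝ) → ℝ)
    (hψ₂ : ∀ j x, ψ₂ j x = (1/2) * (x ⬝ᵥ (Q₂ j).mulVec x) + q₂ j ⬝ᵥ x + α₂ j)
    (ψ : (Fin n → ℝ) → ℝ)
    (hψ : ∀ x, ψ x = finMax hk₁ (fun i => a i ⬝ᵥ x + α i) - finMax hk₂ (fun j => ψ₂ j x)) :
    (ψ '' {x | DStat ψ X x}).Finite := by
  classical
  obtain ⟨m, A, b, hXe⟩ := hX
  subst hXe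
  have hsub : ψ '' {x | DStat ψ {x' | ∀ i, A i ⬝ᵥ x' ≤ b i} x}
      ⊆ ⋃ t : Finset (Fin k₁) × Finset (Fin k₂) × Finset (Fin m),
        ψ '' {x | DStat ψ {x' | ∀ i, A i ⬝ᵥ x' ≤ b i} x ∧ Iset hk₁ a α x = t.1
          ∧ Jset hk₂ ψ₂ x = t.2.1 ∧ Kset A b x = t.2.2} := by
    rintro u ⟨x, hx, rfl⟩
    exact Set.mem_iUnion.mpr ⟨⟨Iset hk₁ a α x, Jset hk₂ ψ₂ x, Kset A b x⟩,
      ⟨x, ⟨hx, rfl, rfl, rfl⟩, rfl⟩⟩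
  refine Set.Finite.subset (Set.finite_iUnion fun t => ?_) hsub
  apply Set.Subsingleton.finite
  rintro u ⟨x, ⟨hx, hIx, hJx, hKx⟩, rfl⟩ v ⟨y, ⟨hy, hIy, hJy, hKy⟩, rfl⟩
  exact keyConst hk₁ hk₂ a α Q₂ q₂ α₂ ψ₂ A b hQ₂ hψ₂ ψ hψ x y hx hy
    (hIx.trans hIy.symm) (hJx.trans hJy.symm) (hKx.trans hKy.symm)
end

section
/- Let X ⊆ ℝⁿ be a polyhedral set, let ψ : ℝⁿ → ℝ be a continuous piecewise linear-quadratic function, and let φ : ℝ → ℝ be a convex function or a concave function. Then the composite function f = φ ∘ ψ has only finitely many d-stationary values on X, i.e., the set f(D_{(f,X)}) is finite. -/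
open Matrix Filter Topology

section Aux
variable {n : ℕ}

noncomputable def qval (Q : Matrix (Fin n) (Fin n) ℝ) (qv : Fin n → ℝ) (α : ℝ)
    (x : Fin n → ℝ) : ℝ :=
  (1/2) * (x ⬝ᵥ Q.mulVec x) + qv ⬝ᵥ x + α

noncomputable def qlin (Q : Matrix (Fin n) (Fin n) ℝ) (qv : Fin n → ℝ) (x v : Fin n → ℝ) : ℝ :=
  (x ⬝ᵥ Q.mulVec v + v ⬝ᵥ Q.mulVec x) / 2 + qv ⬝ᵥ v

noncomputable def qcur (Q : Matrix (Fin n) (Fin n) ℝ) (v : Fin n → ℝ) : ℝ :=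
  (v ⬝ᵥ Q.mulVec v) / 2

lemma qval_expand (Q : Matrix (Fin n) (Fin n) ℝ) (qv : Fin n → ℝ) (α : ℝ) (x v : Fin n → ℝ)
    (t : ℝ) :
    qval Q qv α (x + t • v) = qval Q qv α x + t * qlin Q qv x v + t ^ 2 * qcur Q v := by
  simp only [qval, qlin, qcur, Matrix.mulVec_add, Matrix.mulVec_smul, dotProduct_add,
    add_dotProduct, dotProduct_smul, smul_dotProduct, smul_eq_mul]
  ring

lemma qlin_smul (Q : Matrix (Fin n) (Fin n) ℝ) (qv : Fin n → ℝ) (x v : Fin n → ℝ) (s : ℝ) :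
    qlin Q qv x (s • v) = s * qlin Q qv x v := by
  simp only [qlin, Matrix.mulVec_smul, dotProduct_smul, smul_dotProduct, smul_eq_mul]
  ring

lemma qlin_neg (Q : Matrix (Fin n) (Fin n) ℝ) (qv : Fin n → ℝ) (x v : Fin n → ℝ) :
    qlin Q qv x (-v) = -qlin Q qv x v := by
  have := qlin_smul Q qv x v (-1); simpa using this

lemma qlin_add_self (Q : Matrix (Fin n) (Fin n) ℝ) (qv : Fin n → ℝ) (x v : Fin n → ℝ) :
    qlin Q qv (x + v) v = qlin Q qv x v + 2 * qcur Q v := by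
  simp only [qlin, qcur, Matrix.mulVec_add, dotProduct_add, add_dotProduct]
  ring

lemma seg_mem {m : ℕ} (A : Fin m → Fin n → ℝ) (b : Fin m → ℝ) {x y : Fin n → ℝ}
    (hx : ∀ j, A j ⬝ᵥ x ≤ b j) (hy : ∀ j, A j ⬝ᵥ y ≤ b j) {t : ℝ} (h0 : 0 ≤ t) (h1 : t ≤ 1) :
    ∀ j, A j ⬝ᵥ (x + t • (y - x)) ≤ b j := by
  intro j
  have he : A j ⬝ᵥ (x + t • (y - x)) = (1 - t) * (A j ⬝ᵥ x) + t * (A j ⬝ᵥ y) := by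
    simp only [dotProduct_add, dotProduct_smul, dotProduct_sub, smul_eq_mul]
    ring
  rw [he]
  nlinarith [hx j, hy j]

end Aux





lemma tendsto_lin (a c : ℝ) : Tendsto (fun δ : ℝ => a + δ * c) (𝓝[>] 0) (𝓝 a) := by
  have : Tendsto (fun δ : ℝ => a + δ * c) (𝓝 0) (𝓝 (a + 0 * c)) := by
    exact (tendsto_const_nhds.add ((continuous_id.mul continuous_const).tendsto 0))
  simpa using this.mono_left nhdsWithin_le_nhds

lemma cx_upper (hφ : ConvexOn ℝ Set.univ φ) {u a c t L : ℝ} (hat : 0 < a * t)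
    (hL : Tendsto (fun δ : ℝ => (φ (u + (δ * a + δ ^ 2 * c)) - φ u) / δ) (𝓝[>] 0) (𝓝 L)) :
    L ≤ a * ((φ (u + t) - φ u) / t) := by
  have ha : a ≠ 0 := fun h => by simp [h] at hat
  have ht : t ≠ 0 := fun h => by simp [h] at hat
  set st := (φ (u + t) - φ u) / t with hst
  have e1 : ∀ᶠ δ : ℝ in 𝓝[>] 0, |δ * c| < |a| / 2 := by
    have h0 : Tendsto (fun δ : ℝ => δ * c) (𝓝[>] 0) (𝓝 0) := by
      have := (continuous_id.mul (continuous_const (y := c))).tendsto 0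
      simpa using (show Tendsto (fun δ : ℝ => δ * c) (𝓝[>] 0) (𝓝 (0 * c)) from this.mono_left nhdsWithin_le_nhds)
    have := h0.eventually (eventually_abs_sub_lt 0 (by positivity : (0:ℝ) < |a| / 2))
    simpa using this
  have e2 : ∀ᶠ δ : ℝ in 𝓝[>] 0, δ * (2 * |a|) < |t| := by
    have h0 : Tendsto (fun δ : ℝ => δ * (2 * |a|)) (𝓝[>] 0) (𝓝 0) := by
      have := (continuous_id.mul (continuous_const (y := 2 * |a|))).tendsto 0
      simpa using (show Tendsto (fun δ : ℝ => δ * (2 * |a|)) (𝓝[>] 0) (𝓝 (0 * (2 * |a|))) from this.mono_left nhdsWithin_le_nhds)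
    exact h0.eventually_lt_const (by positivity)
  have e3 : ∀ᶠ δ : ℝ in 𝓝[>] 0, (0:ℝ) < δ := eventually_mem_nhdsWithin
  have ev : ∀ᶠ δ : ℝ in 𝓝[>] 0,
      (φ (u + (δ * a + δ ^ 2 * c)) - φ u) / δ ≤ (a + δ * c) * st := by
    filter_upwards [e1, e2, e3] with δ h1 h2 h3
    set a' := a + δ * c with ha'
    set s := δ * a' with hs
    have hsa : δ * a + δ ^ 2 * c = s := by rw [hs, ha']; ring
    have haa' : |a' - a| < |a| / 2 := by rw [ha']; simpa using h1
    have ha'abs : |a'| < 2 * |a| := by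
      have := abs_sub_abs_le_abs_sub a' a
      nlinarith [abs_nonneg a, abs_nonneg a']
    have hs_abs : |s| < |t| := by
      rw [hs, abs_mul, abs_of_pos h3]
      calc δ * |a'| ≤ δ * (2 * |a|) := by nlinarith
        _ < |t| := h2
    have hsign : 0 < a' * a := by
      rcases lt_or_gt_of_ne ha with hneg | hpos
      · have : a' < a / 2 := by
          have := abs_lt.mp haa'
          have : a' - a < |a| / 2 := this.2
          rw [abs_of_neg hneg] at this; linarith
        nlinarith
      · have : a / 2 < a' := by
          have := (abs_lt.mp haa').1
          rw [abs_of_pos hpos] at this; linarith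
        nlinarith
    rw [hsa]
    have hqs : (φ (u + s) - φ u) / δ = a' * ((φ (u + s) - φ u) / s) := by
      rw [hs]
      have ha'0 : a' ≠ 0 := by intro h; rw [h] at hsign; simp at hsign
      field_simp
    rw [hqs]
    rcases lt_or_gt_of_ne ht with htneg | htpos
    · -- t < 0, so a < 0, a' < 0, s < 0, t < s
      have haneg : a < 0 := by nlinarith
      have ha'neg : a' < 0 := by nlinarith
      have hsneg : s < 0 := by rw [hs]; exact mul_neg_of_pos_of_neg h3 ha'neg
      have hts : t < s := by
        rw [abs_of_neg hsneg, abs_of_neg htneg] at hs_abs; linarith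
      have hslope := hφ.secant_mono (a := u) (x := u + t) (y := u + s)
        (Set.mem_univ _) (Set.mem_univ _) (Set.mem_univ _)
        (by simpa using htneg.ne) (by simpa using hsneg.ne) (by linarith)
      simp only [add_sub_cancel_left] at hslope
      rw [hst]
      nlinarith
    · -- t > 0, a > 0, a' > 0, 0 < s < t
      have hapos : a > 0 := by nlinarith
      have ha'pos : a' > 0 := by nlinarith
      have hspos : 0 < s := by rw [hs]; exact mul_pos h3 ha'pos
      have hts : s < t := by
        rw [abs_of_pos hspos, abs_of_pos htpos] at hs_abs; linarith
      have hslope := hφ.secant_mono (a := u) (x := u + s) (y := u + t)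
        (Set.mem_univ _) (Set.mem_univ _) (Set.mem_univ _)
        (by simpa using hspos.ne') (by simpa using htpos.ne') (by linarith)
      simp only [add_sub_cancel_left] at hslope
      rw [hst]
      nlinarith
  have hlim : Tendsto (fun δ : ℝ => (a + δ * c) * st) (𝓝[>] 0) (𝓝 (a * st)) :=
    (tendsto_lin a c).mul_const st
  exact le_of_tendsto_of_tendsto hL hlim ev







lemma cx_lower (hφ : ConvexOn ℝ Set.univ φ) {u a c t L : ℝ} (hat : a * t < 0)
    (hL : Tendsto (fun δ : ℝ => (φ (u + (δ * a + δ ^ 2 * c)) - φ u) / δ) (𝓝[>] 0) (𝓝 L)) :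
    a * ((φ (u + t) - φ u) / t) ≤ L := by
  have ha : a ≠ 0 := fun h => by simp [h] at hat
  have ht : t ≠ 0 := fun h => by simp [h] at hat
  set st := (φ (u + t) - φ u) / t with hst
  have e1 : ∀ᶠ δ : ℝ in 𝓝[>] 0, |δ * c| < |a| / 2 := by
    have h0 : Tendsto (fun δ : ℝ => δ * c) (𝓝[>] 0) (𝓝 0) := by
      have := (continuous_id.mul (continuous_const (y := c))).tendsto 0
      simpa using (show Tendsto (fun δ : ℝ => δ * c) (𝓝[>] 0) (𝓝 (0 * c)) from this.mono_left nhdsWithin_le_nhds)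
    have := h0.eventually (eventually_abs_sub_lt 0 (by positivity : (0:ℝ) < |a| / 2))
    simpa using this
  have e3 : ∀ᶠ δ : ℝ in 𝓝[>] 0, (0:ℝ) < δ := eventually_mem_nhdsWithin
  have ev : ∀ᶠ δ : ℝ in 𝓝[>] 0,
      (a + δ * c) * st ≤ (φ (u + (δ * a + δ ^ 2 * c)) - φ u) / δ := by
    filter_upwards [e1, e3] with δ h1 h3
    set a' := a + δ * c with ha'
    set s := δ * a' with hs
    have hsa : δ * a + δ ^ 2 * c = s := by rw [hs, ha']; ring
    have haa' : |a' - a| < |a| / 2 := by rw [ha']; simpa using h1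
    have hsign : 0 < a' * a := by
      rcases lt_or_gt_of_ne ha with hneg | hpos
      · have h2 : a' - a < |a| / 2 := (abs_lt.mp haa').2
        rw [abs_of_neg hneg] at h2
        nlinarith
      · have h2 : -(|a| / 2) < a' - a := (abs_lt.mp haa').1
        rw [abs_of_pos hpos] at h2
        nlinarith
    rw [hsa]
    have ha'0 : a' ≠ 0 := by intro h; rw [h] at hsign; simp at hsign
    have hqs : (φ (u + s) - φ u) / δ = a' * ((φ (u + s) - φ u) / s) := by
      rw [hs]; field_simp
    rw [hqs]
    rcases lt_or_gt_of_ne ht with htneg | htpos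
    · -- t < 0, so a > 0 (a*t<0), a' > 0, s > 0, t < 0 < s
      have hapos : 0 < a := by nlinarith
      have ha'pos : 0 < a' := by nlinarith
      have hspos : 0 < s := mul_pos h3 ha'pos
      have hslope := hφ.secant_mono (a := u) (x := u + t) (y := u + s)
        (Set.mem_univ _) (Set.mem_univ _) (Set.mem_univ _)
        (by simpa using htneg.ne) (by simpa using hspos.ne') (by linarith)
      simp only [add_sub_cancel_left] at hslope
      rw [hst]; nlinarith
    · -- t > 0, a < 0, a' < 0, s < 0 < t
      have haneg : a < 0 := by nlinarith
      have ha'neg : a' < 0 := by nlinarith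
      have hsneg : s < 0 := mul_neg_of_pos_of_neg h3 ha'neg
      have hslope := hφ.secant_mono (a := u) (x := u + s) (y := u + t)
        (Set.mem_univ _) (Set.mem_univ _) (Set.mem_univ _)
        (by simpa using hsneg.ne) (by simpa using htpos.ne') (by linarith)
      simp only [add_sub_cancel_left] at hslope
      rw [hst]; nlinarith
  have hlim : Tendsto (fun δ : ℝ => (a + δ * c) * st) (𝓝[>] 0) (𝓝 (a * st)) :=
    (tendsto_lin a c).mul_const st
  exact le_of_tendsto_of_tendsto hlim hL ev

variable {φ : ℝ → ℝ}
lemma stat_min (hφ : ConvexOn ℝ Set.univ φ) {u a c a' c' L L' : ℝ} (haa' : a * a' < 0)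
    (hL : Tendsto (fun δ : ℝ => (φ (u + (δ * a + δ ^ 2 * c)) - φ u) / δ) (𝓝[>] 0) (𝓝 L))
    (hL0 : 0 ≤ L)
    (hL' : Tendsto (fun δ : ℝ => (φ (u + (δ * a' + δ ^ 2 * c')) - φ u) / δ) (𝓝[>] 0) (𝓝 L'))
    (hL'0 : 0 ≤ L') : ∀ w, φ u ≤ φ w := by
  intro w
  rcases eq_or_ne w u with rfl | hw
  · exact le_refl _
  have ht : w - u ≠ 0 := sub_ne_zero.mpr hw
  set t := w - u with htdef
  have hut : u + t = w := by rw [htdef]; ring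
  set S := (φ (u + t) - φ u) / t with hS
  have hTS : t * S = φ w - φ u := by rw [hS, hut]; field_simp
  have ha : a ≠ 0 := fun h0 => by simp [h0] at haa'
  have ha' : a' ≠ 0 := fun h0 => by simp [h0] at haa'
  have ha2 : 0 < a ^ 2 := by positivity
  have ha'2 : 0 < a' ^ 2 := by positivity
  rcases lt_trichotomy (a * t) 0 with h | h | h
  · have ha't : 0 < a' * t := by nlinarith [mul_pos_of_neg_of_neg haa' h]
    have hub := cx_upper hφ ha't hL'
    rw [← hS] at hub
    have h1 : 0 ≤ a' * S := le_trans hL'0 hub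
    have h2 : 0 ≤ a' ^ 2 * (t * S) := by nlinarith [mul_nonneg ha't.le h1]
    nlinarith
  · exact absurd (mul_eq_zero.mp h) (by rintro (h0 | h0); exacts [ha h0, ht h0])
  · have hub := cx_upper hφ h hL
    rw [← hS] at hub
    have h1 : 0 ≤ a * S := le_trans hL0 hub
    have h2 : 0 ≤ a ^ 2 * (t * S) := by nlinarith [mul_nonneg h.le h1]
    nlinarith

lemma stat_max (hφ : ConcaveOn ℝ Set.univ φ) {u a c a' c' L L' : ℝ} (haa' : a * a' < 0)
    (hL : Tendsto (fun δ : ℝ => (φ (u + (δ * a + δ ^ 2 * c)) - φ u) / δ) (𝓝[>] 0) (𝓝 L))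
    (hL0 : 0 ≤ L)
    (hL' : Tendsto (fun δ : ℝ => (φ (u + (δ * a' + δ ^ 2 * c')) - φ u) / δ) (𝓝[>] 0) (𝓝 L'))
    (hL'0 : 0 ≤ L') : ∀ w, φ w ≤ φ u := by
  have hcv : ConvexOn ℝ Set.univ (-φ) := hφ.neg
  have hLn : Tendsto (fun δ : ℝ => ((-φ) (u + (δ * a + δ ^ 2 * c)) - (-φ) u) / δ)
      (𝓝[>] 0) (𝓝 (-L)) := by
    refine hL.neg.congr (fun δ => ?_)
    simp only [Pi.neg_apply]
    ring
  have hLn' : Tendsto (fun δ : ℝ => ((-φ) (u + (δ * a' + δ ^ 2 * c')) - (-φ) u) / δ)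
      (𝓝[>] 0) (𝓝 (-L')) := by
    refine hL'.neg.congr (fun δ => ?_)
    simp only [Pi.neg_apply]
    ring
  intro w
  rcases eq_or_ne w u with rfl | hw
  · exact le_refl _
  have ht : w - u ≠ 0 := sub_ne_zero.mpr hw
  set t := w - u with htdef
  have hut : u + t = w := by rw [htdef]; ring
  set S := ((-φ) (u + t) - (-φ) u) / t with hS
  have hTS : t * S = φ u - φ w := by
    rw [hS, hut]; simp only [Pi.neg_apply]; field_simp; ring
  have ha : a ≠ 0 := fun h0 => by simp [h0] at haa'
  have ha' : a' ≠ 0 := fun h0 => by simp [h0] at haa'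
  have ha2 : 0 < a ^ 2 := by positivity
  have ha'2 : 0 < a' ^ 2 := by positivity
  rcases lt_trichotomy (a * t) 0 with h | h | h
  · have hlb := cx_lower hcv h hLn
    rw [← hS] at hlb
    have h1 : a * S ≤ 0 := le_trans hlb (by linarith)
    have h2 : 0 ≤ a ^ 2 * (t * S) := by nlinarith [mul_nonneg (neg_nonneg.mpr h.le) (neg_nonneg.mpr h1)]
    nlinarith
  · exact absurd (mul_eq_zero.mp h) (by rintro (h0 | h0); exacts [ha h0, ht h0])
  · have ha't : a' * t < 0 := by nlinarith [mul_neg_of_neg_of_pos haa' h]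
    have hlb := cx_lower hcv ha't hLn'
    rw [← hS] at hlb
    have h1 : a' * S ≤ 0 := le_trans hlb (by linarith)
    have h2 : 0 ≤ a' ^ 2 * (t * S) := by
      nlinarith [mul_nonneg (neg_nonneg.mpr ha't.le) (neg_nonneg.mpr h1)]
    nlinarith




lemma exists_step {m mc : ℕ} (A : Fin m → Fin n → ℝ) (b : Fin m → ℝ)
    (Ac : Fin mc → Fin n → ℝ) (bc : Fin mc → ℝ) (x d : Fin n → ℝ)
    (hx : ∀ j, A j ⬝ᵥ x ≤ b j) (hxc : ∀ j, Ac j ⬝ᵥ x ≤ bc j)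
    (hact : ∀ j, A j ⬝ᵥ x = b j → A j ⬝ᵥ d = 0)
    (hactc : ∀ j, Ac j ⬝ᵥ x = bc j → Ac j ⬝ᵥ d = 0) :
    ∃ s : ℝ, 0 < s ∧ (∀ j, A j ⬝ᵥ (x + s • d) ≤ b j) ∧ (∀ j, Ac j ⬝ᵥ (x + s • d) ≤ bc j) := by
  have gen : ∀ (m' : ℕ) (A' : Fin m' → Fin n → ℝ) (b' : Fin m' → ℝ),
      (∀ j, A' j ⬝ᵥ x ≤ b' j) → (∀ j, A' j ⬝ᵥ x = b' j → A' j ⬝ᵥ d = 0) →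
      ∀ᶠ s : ℝ in 𝓝[>] 0, ∀ j, A' j ⬝ᵥ (x + s • d) ≤ b' j := by
    intro m' A' b' hx' hact'
    rw [eventually_all]
    intro j
    have hexp : ∀ s : ℝ, A' j ⬝ᵥ (x + s • d) = A' j ⬝ᵥ x + s * (A' j ⬝ᵥ d) := by
      intro s; simp [dotProduct_add, dotProduct_smul, smul_eq_mul]
    rcases eq_or_lt_of_le (hx' j) with heq | hlt
    · filter_upwards with s
      rw [hexp, hact' j heq, mul_zero, add_zero]
      exact le_of_eq heq
    · have htd : Tendsto (fun s : ℝ => A' j ⬝ᵥ x + s * (A' j ⬝ᵥ d)) (𝓝[>] 0)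
          (𝓝 (A' j ⬝ᵥ x)) := by
        have : Tendsto (fun s : ℝ => A' j ⬝ᵥ x + s * (A' j ⬝ᵥ d)) (𝓝 0)
            (𝓝 (A' j ⬝ᵥ x + 0 * (A' j ⬝ᵥ d))) :=
          tendsto_const_nhds.add ((continuous_id.mul continuous_const).tendsto 0)
        simpa using this.mono_left nhdsWithin_le_nhds
      filter_upwards [htd.eventually_lt_const hlt] with s hs
      rw [hexp]; exact le_of_lt hs
  have h1 := gen m A b hx hact
  have h2 := gen mc Ac bc hxc hactc
  have h3 : ∀ᶠ s : ℝ in 𝓝[>] 0, (0:ℝ) < s := eventually_mem_nhdsWithin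
  obtain ⟨s, hs1, hs2, hs3⟩ := (h3.and (h1.and h2)).exists
  exact ⟨s, hs1, hs2, hs3⟩

section Main
variable {m mc : ℕ} {A : Fin m → Fin n → ℝ} {b : Fin m → ℝ}
  {Ac : Fin mc → Fin n → ℝ} {bc : Fin mc → ℝ}
  {ψ : (Fin n → ℝ) → ℝ} {φ : ℝ → ℝ}
  {Q : Matrix (Fin n) (Fin n) ℝ} {qv : Fin n → ℝ} {α : ℝ}
  {E : ℝ → ℝ → Prop}

lemma helper_zero
    (hψq : ∀ z, (∀ j, Ac j ⬝ᵥ z ≤ bc j) → ψ z = qval Q qv α z)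
    (hdich : ∀ (u a c a' c' L L' : ℝ), a * a' < 0 →
      Tendsto (fun δ : ℝ => (φ (u + (δ * a + δ ^ 2 * c)) - φ u) / δ) (𝓝[>] 0) (𝓝 L) → 0 ≤ L →
      Tendsto (fun δ : ℝ => (φ (u + (δ * a' + δ ^ 2 * c')) - φ u) / δ) (𝓝[>] 0) (𝓝 L') →
      0 ≤ L' → ∀ w, E u w)
    {x y : Fin n → ℝ}
    (hxX : ∀ j, A j ⬝ᵥ x ≤ b j) (hyX : ∀ j, A j ⬝ᵥ y ≤ b j)
    (hxC : ∀ j, Ac j ⬝ᵥ x ≤ bc j) (hyC : ∀ j, Ac j ⬝ᵥ y ≤ bc j)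
    (hsx : DStat (φ ∘ ψ) {z | ∀ j, A j ⬝ᵥ z ≤ b j} x)
    (hactX : ∀ j, A j ⬝ᵥ x = b j → A j ⬝ᵥ y = b j)
    (hactC : ∀ j, Ac j ⬝ᵥ x = bc j → Ac j ⬝ᵥ y = bc j)
    (hnE : ¬ ∀ w, E (ψ x) w) :
    qlin Q qv x (y - x) = 0 := by
  by_contra hne
  have hux : ψ x = qval Q qv α x := hψq x hxC
  -- first direction : towards y
  obtain ⟨L, hDD, hL0⟩ := hsx.2 y hyX
  have hIoc : Set.Ioc (0:ℝ) 1 ∈ 𝓝[>] (0:ℝ) :=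
    Ioc_mem_nhdsGT_of_mem (Set.mem_Ico.mpr ⟨le_refl 0, one_pos⟩)
  have hq1 : Tendsto (fun δ : ℝ => (φ (ψ x + (δ * qlin Q qv x (y - x) +
      δ ^ 2 * qcur Q (y - x))) - φ (ψ x)) / δ) (𝓝[>] 0) (𝓝 L) := by
    refine Filter.Tendsto.congr' ?_ hDD
    filter_upwards [hIoc] with δ hδ
    have hmem := seg_mem Ac bc hxC hyC hδ.1.le hδ.2
    have hψ2 : ψ (x + δ • (y - x)) = qval Q qv α (x + δ • (y - x)) := hψq _ hmem
    simp only [Function.comp_apply, hψ2, hux, qval_expand]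
    rw [add_assoc]
  -- second direction : towards x + s • (x - y)
  have hdX : ∀ j, A j ⬝ᵥ x = b j → A j ⬝ᵥ (x - y) = 0 := by
    intro j hj
    rw [dotProduct_sub, hj, hactX j hj, sub_self]
  have hdC : ∀ j, Ac j ⬝ᵥ x = bc j → Ac j ⬝ᵥ (x - y) = 0 := by
    intro j hj
    rw [dotProduct_sub, hj, hactC j hj, sub_self]
  obtain ⟨s, hs0, hwX, hwC⟩ := exists_step A b Ac bc x (x - y) hxX hxC hdX hdC
  obtain ⟨L', hDD', hL'0⟩ := hsx.2 (x + s • (x - y)) hwX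
  have hwx : x + s • (x - y) - x = s • (x - y) := add_sub_cancel_left _ _
  rw [hwx] at hDD'
  have hq2 : Tendsto (fun δ : ℝ => (φ (ψ x + (δ * (-(s * qlin Q qv x (y - x))) +
      δ ^ 2 * qcur Q (s • (x - y)))) - φ (ψ x)) / δ) (𝓝[>] 0) (𝓝 L') := by
    refine Filter.Tendsto.congr' ?_ hDD'
    filter_upwards [hIoc] with δ hδ
    have hmem' := seg_mem Ac bc hxC hwC hδ.1.le hδ.2
    rw [hwx] at hmem'
    have hψ2 : ψ (x + δ • (s • (x - y))) = qval Q qv α (x + δ • (s • (x - y))) := hψq _ hmem'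
    simp only [Function.comp_apply, hψ2, hux, qval_expand]
    have hlin : qlin Q qv x (s • (x - y)) = -(s * qlin Q qv x (y - x)) := by
      rw [qlin_smul, show x - y = -(y - x) from (neg_sub y x).symm, qlin_neg]; ring
    rw [hlin, add_assoc]
  have hprod : qlin Q qv x (y - x) * (-(s * qlin Q qv x (y - x))) < 0 := by
    have : 0 < s * qlin Q qv x (y - x) ^ 2 := by positivity
    nlinarith
  exact hnE (hdich (ψ x) _ _ _ _ L L' hprod hq1 hL0 hq2 hL'0)

lemma pair_eq
    (hψq : ∀ z, (∀ j, Ac j ⬝ᵥ z ≤ bc j) → ψ z = qval Q qv α z)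
    (hdich : ∀ (u a c a' c' L L' : ℝ), a * a' < 0 →
      Tendsto (fun δ : ℝ => (φ (u + (δ * a + δ ^ 2 * c)) - φ u) / δ) (𝓝[>] 0) (𝓝 L) → 0 ≤ L →
      Tendsto (fun δ : ℝ => (φ (u + (δ * a' + δ ^ 2 * c')) - φ u) / δ) (𝓝[>] 0) (𝓝 L') →
      0 ≤ L' → ∀ w, E u w)
    (hsymm : ∀ u u', (∀ w, E u w) → (∀ w, E u' w) → φ u = φ u')
    {x y : Fin n → ℝ}
    (hxX : ∀ j, A j ⬝ᵥ x ≤ b j) (hyX : ∀ j, A j ⬝ᵥ y ≤ b j)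
    (hxC : ∀ j, Ac j ⬝ᵥ x ≤ bc j) (hyC : ∀ j, Ac j ⬝ᵥ y ≤ bc j)
    (hsx : DStat (φ ∘ ψ) {z | ∀ j, A j ⬝ᵥ z ≤ b j} x)
    (hsy : DStat (φ ∘ ψ) {z | ∀ j, A j ⬝ᵥ z ≤ b j} y)
    (hactX : ∀ j, A j ⬝ᵥ x = b j ↔ A j ⬝ᵥ y = b j)
    (hactC : ∀ j, Ac j ⬝ᵥ x = bc j ↔ Ac j ⬝ᵥ y = bc j)
    (hflag : (∀ w, E (ψ x) w) ↔ (∀ w, E (ψ y) w)) :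
    φ (ψ x) = φ (ψ y) := by
  by_cases hM : ∀ w, E (ψ x) w
  · exact hsymm _ _ hM (hflag.mp hM)
  · have hMy : ¬ ∀ w, E (ψ y) w := fun h => hM (hflag.mpr h)
    have hax : qlin Q qv x (y - x) = 0 :=
      helper_zero hψq hdich hxX hyX hxC hyC hsx (fun j => (hactX j).mp)
        (fun j => (hactC j).mp) hM
    have hay : qlin Q qv y (x - y) = 0 :=
      helper_zero hψq hdich hyX hxX hyC hxC hsy (fun j => (hactX j).mpr)
        (fun j => (hactC j).mpr) hMy
    have hay' : qlin Q qv y (y - x) = 0 := by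
      have h1 : qlin Q qv y (-(x - y)) = -qlin Q qv y (x - y) := qlin_neg _ _ _ _
      rw [neg_sub, hay, neg_zero] at h1
      exact h1
    have hyx : x + (y - x) = y := by abel
    have hcur : qcur Q (y - x) = 0 := by
      have h2 := qlin_add_self Q qv x (y - x)
      rw [hyx, hay', hax] at h2
      linarith
    have hq : qval Q qv α y = qval Q qv α x := by
      have h3 := qval_expand Q qv α x (y - x) 1
      rw [one_smul, hyx, hax, hcur] at h3
      rw [h3]; ring
    rw [hψq x hxC, hψq y hyC, hq]


end Main


/-- Proposition 11 (with PLQ inner function): if `ψ` is a continuous piecewise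
linear-quadratic function on `ℝⁿ` and `φ : ℝ → ℝ` is convex or concave, then the
composite `f = φ ∘ ψ` has only finitely many d-stationary values on a polyhedral set. -/
theorem stmt_14 {n : ℕ} (X : Set (Fin n → ℝ)) (hX : IsPolyhedral X)
    (ψ : (Fin n → ℝ) → ℝ) (hψcont : Continuous ψ) (hplq : IsPLQOn ψ Set.univ)
    (φ : ℝ → ℝ) (hφ : ConvexOn ℝ Set.univ φ ∨ ConcaveOn ℝ Set.univ φ) :
    ((φ ∘ ψ) '' {x | DStat (φ ∘ ψ) X x}).Finite := by
  classical
  obtain ⟨m, A, b, hXeq⟩ := hX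
  subst hXeq
  obtain ⟨k, C, F, hCpoly, hFquad, hcover, hagree⟩ := hplq
  choose M Ac bc hCeq using hCpoly
  choose Q qv al hsym hFeq using hFquad
  have hmem : ∀ x : Fin n → ℝ, ∃ i, x ∈ C i := fun x =>
    Set.mem_iUnion.mp (hcover ▸ Set.mem_univ x)
  choose pc hpc using hmem
  have hFq : ∀ i z, F i z = qval (Q i) (qv i) (al i) z := by
    intro i z
    rw [hFeq i z]
    rfl
  have hψq : ∀ i, ∀ z, (∀ j, Ac i j ⬝ᵥ z ≤ bc i j) → ψ z = qval (Q i) (qv i) (al i) z := by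
    intro i z hz
    have hzC : z ∈ C i := by rw [hCeq i]; exact hz
    rw [hagree i hzC, hFq i z]
  have main : ∀ E : ℝ → ℝ → Prop,
      (∀ (u a c a' c' L L' : ℝ), a * a' < 0 →
        Tendsto (fun δ : ℝ => (φ (u + (δ * a + δ ^ 2 * c)) - φ u) / δ) (𝓝[>] 0) (𝓝 L) →
        0 ≤ L →
        Tendsto (fun δ : ℝ => (φ (u + (δ * a' + δ ^ 2 * c')) - φ u) / δ) (𝓝[>] 0) (𝓝 L') →
        0 ≤ L' → ∀ w, E u w) →
      (∀ u u', (∀ w, E u w) → (∀ w, E u' w) → φ u = φ u') →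
      ((φ ∘ ψ) '' {x | DStat (φ ∘ ψ) {z | ∀ j, A j ⬝ᵥ z ≤ b j} x}).Finite := by
    intro E hdich hsymm
    set S := {z : Fin n → ℝ | ∀ j, A j ⬝ᵥ z ≤ b j} with hS
    let ι := (i : Fin k) × ((Fin m → Prop) × (Fin (M i) → Prop) × Prop)
    let cl : (Fin n → ℝ) → ι := fun z =>
      ⟨pc z, (fun j => A j ⬝ᵥ z = b j,
              fun j => Ac (pc z) j ⬝ᵥ z = bc (pc z) j,
              ∀ w, E (ψ z) w)⟩
    have key : ∀ x y, DStat (φ ∘ ψ) S x → DStat (φ ∘ ψ) S y → cl x = cl y →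
        (φ ∘ ψ) x = (φ ∘ ψ) y := by
      intro x y hx hy hcl
      have h1 : pc x = pc y := congrArg Sigma.fst hcl
      have h2 : HEq ((fun j => A j ⬝ᵥ x = b j,
              fun j => Ac (pc x) j ⬝ᵥ x = bc (pc x) j,
              ∀ w, E (ψ x) w) : (Fin m → Prop) × (Fin (M (pc x)) → Prop) × Prop)
          ((fun j => A j ⬝ᵥ y = b j,
              fun j => Ac (pc y) j ⬝ᵥ y = bc (pc y) j,
              ∀ w, E (ψ y) w) : (Fin m → Prop) × (Fin (M (pc y)) → Prop) × Prop) :=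
        (Sigma.mk.inj_iff.mp hcl).2
      rw [← h1] at h2
      have h2' := eq_of_heq h2
      have hA : (fun j => A j ⬝ᵥ x = b j) = (fun j => A j ⬝ᵥ y = b j) :=
        congrArg Prod.fst h2'
      have hAc : (fun j => Ac (pc x) j ⬝ᵥ x = bc (pc x) j)
          = (fun j => Ac (pc x) j ⬝ᵥ y = bc (pc x) j) :=
        congrArg (fun p => p.2.1) h2'
      have hEe : (∀ w, E (ψ x) w) = (∀ w, E (ψ y) w) := congrArg (fun p => p.2.2) h2'
      have hxC : ∀ j, Ac (pc x) j ⬝ᵥ x ≤ bc (pc x) j := by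
        have := hpc x
        rwa [hCeq (pc x)] at this
      have hyC : ∀ j, Ac (pc x) j ⬝ᵥ y ≤ bc (pc x) j := by
        have := hpc y
        rw [hCeq (pc y)] at this
        rwa [← h1] at this
      have hxX : ∀ j, A j ⬝ᵥ x ≤ b j := hx.1
      have hyX : ∀ j, A j ⬝ᵥ y ≤ b j := hy.1
      exact pair_eq (hψq (pc x)) hdich hsymm hxX hyX hxC hyC hx hy
        (fun j => iff_of_eq (congrFun hA j))
        (fun j => iff_of_eq (congrFun hAc j))
        (iff_of_eq hEe)
    have : (φ ∘ ψ) '' {x | DStat (φ ∘ ψ) S x} ⊆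
        Set.range (fun i : ι =>
          if h : ∃ z, DStat (φ ∘ ψ) S z ∧ cl z = i then (φ ∘ ψ) h.choose else 0) := by
      rintro _ ⟨x, hx, rfl⟩
      refine ⟨cl x, ?_⟩
      have hex : ∃ z, DStat (φ ∘ ψ) S z ∧ cl z = cl x := ⟨x, hx, rfl⟩
      show (if h : ∃ z, DStat (φ ∘ ψ) S z ∧ cl z = cl x then (φ ∘ ψ) h.choose else 0)
        = (φ ∘ ψ) x
      rw [dif_pos hex]
      exact key _ _ hex.choose_spec.1 hx hex.choose_spec.2
    exact Set.Finite.subset (Set.finite_range _) this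
  rcases hφ with hcv | hcc
  · exact main (fun u w => φ u ≤ φ w)
      (fun u a c a' c' L L' h1 h2 h3 h4 h5 => stat_min hcv h1 h2 h3 h4 h5)
      (fun u u' h h' => le_antisymm (h u') (h' u))
  · exact main (fun u w => φ w ≤ φ u)
      (fun u a c a' c' L L' h1 h2 h3 h4 h5 => stat_max hcc h1 h2 h3 h4 h5)
      (fun u u' h h' => le_antisymm (h' u) (h u'))
end

section
/- Let ψ : ℝⁿ → ℝ be continuous and let S ⊆ ℝⁿ be a set such that the image ψ(S) is a finite set. Let {xᵏ} be a bounded sequence in ℝⁿ every accumulation point of which belongs to S. Then the sequence of values {ψ(xᵏ)} converges (necessarily to an element of ψ(S)) if and only if ψ(x^{k+1}) − ψ(xᵏ) → 0. -/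
open Filter

/-- Proposition 14: let `ψ` be continuous and `S` a set with `ψ(S)` finite. If `{xᵏ}` is
a bounded sequence every accumulation point of which lies in `S`, then `{ψ(xᵏ)}` converges
(necessarily to an element of `ψ(S)`) iff `ψ(x^{k+1}) − ψ(xᵏ) → 0`. -/
theorem stmt_16 {n : ℕ} (ψ : (Fin n → ℝ) → ℝ) (hψ : Continuous ψ)
    (S : Set (Fin n → ℝ)) (hS : (ψ '' S).Finite)
    (x : ℕ → Fin n → ℝ) (hbdd : ∃ R, ∀ k, ‖x k‖ ≤ R)
    (hacc : ∀ p, MapClusterPt p atTop x → p ∈ S) :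
    (∃ L ∈ ψ '' S, Tendsto (fun k => ψ (x k)) atTop (nhds L)) ↔
      Tendsto (fun k => ψ (x (k + 1)) - ψ (x k)) atTop (nhds 0) := by
  obtain ⟨R, hR⟩ := hbdd
  set y : ℕ → ℝ := fun k => ψ (x k) with hy
  constructor
  · rintro ⟨L, -, hL⟩
    have h1 : Tendsto (fun k => y (k + 1)) atTop (nhds L) :=
      hL.comp (tendsto_add_atTop_nat 1)
    simpa using h1.sub hL
  · intro hdiff
    have hxball : ∀ k, x k ∈ Metric.closedBall (0 : Fin n → ℝ) R := by
      intro k; simpa [Metric.mem_closedBall, dist_eq_norm] using hR k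
    have hballbdd : Bornology.IsBounded (Metric.closedBall (0 : Fin n → ℝ) R) :=
      Metric.isBounded_closedBall
    -- every subsequence of x along a tendsto-atTop map has a convergent further
    -- subsequence with limit in S
    have hsub : ∀ ns : ℕ → ℕ, Tendsto ns atTop atTop →
        ∃ p ∈ S, ∃ φ : ℕ → ℕ, StrictMono φ ∧
          Tendsto (fun m => x (ns (φ m))) atTop (nhds p) := by
      intro ns hns
      obtain ⟨p, -, φ, hφ, hφlim⟩ :=
        tendsto_subseq_of_bounded hballbdd (fun m => hxball (ns m))
      refine ⟨p, hacc p ?_, φ, hφ, hφlim⟩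
      exact MapClusterPt.of_comp (hns.comp hφ.tendsto_atTop) hφlim.mapClusterPt
    -- set of cluster values of y
    set T : Set ℝ := {L | MapClusterPt L atTop y} with hT
    have hTsub : T ⊆ ψ '' S := by
      intro L hL
      have hnb : NeBot (nhds L ⊓ map y atTop) := hL
      obtain ⟨θ, hθmono, hθ⟩ := subseq_tendsto_of_neBot hnb
      obtain ⟨p, hpS, φ, hφ, hφlim⟩ := hsub θ hθmono.tendsto_atTop
      refine ⟨p, hpS, ?_⟩
      have h1 : Tendsto (fun m => y (θ (φ m))) atTop (nhds (ψ p)) :=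
        (hψ.continuousAt.tendsto).comp hφlim
      have h2 : Tendsto (fun m => y (θ (φ m))) atTop (nhds L) :=
        hθ.comp hφ.tendsto_atTop
      exact tendsto_nhds_unique h1 h2
    have hTfin : T.Finite := hS.subset hTsub
    -- T is nonempty
    obtain ⟨p0, hp0S, φ0, hφ0, hφ0lim⟩ := hsub id tendsto_id
    have hL0 : ψ p0 ∈ T := by
      refine MapClusterPt.of_comp (φ := φ0) hφ0.tendsto_atTop (Tendsto.mapClusterPt ?_)
      exact (hψ.continuousAt.tendsto).comp hφ0lim
    -- key: no two distinct cluster values (crossing argument)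
    have hkey : ∀ a ∈ T, ∀ b ∈ T, a < b → False := by
      intro a ha b hb hab
      classical
      set T' : Set ℝ := T ∩ Set.Ioi a with hT'
      have hT'fin : T'.Finite := hTfin.subset Set.inter_subset_left
      have hT'ne : T'.Nonempty := ⟨b, hb, hab⟩
      set u : ℝ := sInf T' with hu
      have huT' : u ∈ T' := hT'ne.csInf_mem hT'fin
      have hau : a < u := huT'.2
      have hgap : ∀ t ∈ T, a < t → u ≤ t := fun t ht hat =>
        csInf_le hT'fin.bddBelow ⟨ht, hat⟩
      set ε : ℝ := (u - a) / 4 with hε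
      have hεpos : (0:ℝ) < ε := by rw [hε]; linarith
      set c : ℝ := (a + u) / 2 with hc
      have hfa : ∃ᶠ k in atTop, y k < c - ε :=
        (mapClusterPt_iff_frequently.mp ha) (Set.Iio (c - ε))
          (Iio_mem_nhds (by rw [hc, hε]; linarith))
      have hfu : ∃ᶠ k in atTop, c + ε < y k :=
        (mapClusterPt_iff_frequently.mp huT'.1) (Set.Ioi (c + ε))
          (Ioi_mem_nhds (by rw [hc, hε]; linarith))
      have hstep : ∀ᶠ k in atTop, |y (k + 1) - y k| < ε := by
        have := hdiff.eventually (Metric.ball_mem_nhds (0:ℝ) hεpos)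
        simpa [Real.dist_eq] using this
      obtain ⟨N, hN⟩ := eventually_atTop.mp hstep
      -- frequently y ∈ [c - ε, c + ε]
      have hfreq : ∃ᶠ k in atTop, y k ∈ Set.Icc (c - ε) (c + ε) := by
        rw [frequently_atTop]
        intro M
        obtain ⟨k, hkM, hk⟩ := (frequently_atTop.mp hfa) (max M N)
        obtain ⟨m, hmk, hm⟩ := (frequently_atTop.mp hfu) (k + 1)
        have hex : ∃ j, k ≤ j ∧ c - ε < y j :=
          ⟨m, le_trans (Nat.le_succ k) hmk, by linarith⟩
        set j : ℕ := Nat.find hex with hj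
        obtain ⟨hjk, hjy⟩ := Nat.find_spec hex
        rw [← hj] at hjk hjy
        have hjne : j ≠ k := by
          intro h
          rw [h] at hjy; linarith
        have hjk1 : k + 1 ≤ j := lt_of_le_of_ne hjk (Ne.symm hjne)
        have hj1 : ¬ (k ≤ j - 1 ∧ c - ε < y (j - 1)) :=
          Nat.find_min hex (by omega)
        have hkj1 : k ≤ j - 1 := by omega
        have hyj1 : y (j - 1) ≤ c - ε := by
          by_contra h
          exact hj1 ⟨hkj1, lt_of_not_ge h⟩
        have hstepj : |y ((j - 1) + 1) - y (j - 1)| < ε :=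
          hN (j - 1) (le_trans (le_max_right M N) (le_trans hkM hkj1))
        have hjeq : (j - 1) + 1 = j := by omega
        rw [hjeq] at hstepj
        have hylt : y j ≤ c + ε := by
          have := abs_lt.mp hstepj
          linarith [this.2]
        exact ⟨j, le_trans (le_trans (le_max_left M N) hkM) hjk,
          le_of_lt hjy, hylt⟩
      -- get a cluster value of y inside the forbidden interval
      have hnb : NeBot (atTop ⊓ Filter.principal {k | y k ∈ Set.Icc (c - ε) (c + ε)}) :=
        frequently_iff_neBot.mp hfreq
      have hle : map y (atTop ⊓ Filter.principal {k | y k ∈ Set.Icc (c - ε) (c + ε)}) ≤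
          Filter.principal (Set.Icc (c - ε) (c + ε)) := by
        refine le_trans (map_mono inf_le_right) ?_
        rw [Filter.map_principal]
        exact principal_mono.mpr (by rintro z ⟨k, hk, rfl⟩; exact hk)
      obtain ⟨z, hz, hzc⟩ :=
        (isCompact_Icc (a := c - ε) (b := c + ε)).exists_mapClusterPt hle
      have hzT : z ∈ T := by
        have h' : ClusterPt z (map y (atTop ⊓
            Filter.principal {k | y k ∈ Set.Icc (c - ε) (c + ε)})) := hzc
        exact h'.mono (map_mono inf_le_left)
      have h1 : a < z := by
        have hca : a < c - ε := by rw [hc, hε]; linarith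
        linarith [hz.1]
      have h2 : z < u := by
        have hcu : c + ε < u := by rw [hc, hε]; linarith
        linarith [hz.2]
      exact absurd (hgap z hzT h1) (not_le.mpr h2)
    -- all cluster values equal ψ p0
    have hsingle : ∀ L ∈ T, L = ψ p0 := by
      intro L hL
      rcases lt_trichotomy L (ψ p0) with h | h | h
      · exact absurd (hkey L hL (ψ p0) hL0 h) (fun h => h)
      · exact h
      · exact absurd (hkey (ψ p0) hL0 L hL h) (fun h => h)
    refine ⟨ψ p0, hTsub hL0, ?_⟩
    apply tendsto_of_subseq_tendsto
    intro ns hns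
    obtain ⟨p, hpS, φ, hφ, hφlim⟩ := hsub ns hns
    have hpT : ψ p ∈ T := by
      refine MapClusterPt.of_comp (φ := fun m => ns (φ m))
        (hns.comp hφ.tendsto_atTop) (Tendsto.mapClusterPt ?_)
      exact (hψ.continuousAt.tendsto).comp hφlim
    refine ⟨φ, ?_⟩
    have := (hψ.continuousAt.tendsto).comp hφlim
    rwa [hsingle (ψ p) hpT] at this
end
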